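/- arXiv:1712.09053 — 4 statements merged into one kernel-verified Lean document; each statement's English description precedes it below -/
import Mathlib

section
/- Let (z_j)_{j∈J} be a (finite or countable) family in the open upper half-plane ℂ₊ = {z ∈ ℂ : Im z > 0} with |z_j| ≤ r₀ for all j and with ∑_j Im z_j < ∞. Then for every integer n ≥ 1 the family (Im(z_j^{n+1}))_j is absolutely summable and ∑_j |Im(z_j^{n+1})| ≤ (π/2)(n+1) r₀ⁿ ∑_j Im z_j. -/
open Real

lemma stmt_12_aux (z : ℂ) (hz : 0 ≤ z.im) (n : ℕ) :
    |((z ^ (n + 1)).im)| ≤ (n + 1) * ‖z‖ ^ n * z.im := by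
  induction n with
  | zero => simp [abs_of_nonneg hz]
  | succ n ih =>
    have h1 : z ^ (n + 2) = z ^ (n + 1) * z := by ring
    rw [h1, Complex.mul_im]
    have h2 : |(z ^ (n + 1)).im * z.re + (z ^ (n + 1)).re * z.im|
        ≤ |(z ^ (n + 1)).im| * |z.re| + |(z ^ (n + 1)).re| * z.im := by
      calc _ ≤ |(z ^ (n + 1)).im * z.re| + |(z ^ (n + 1)).re * z.im| := abs_add_le _ _
        _ = |(z ^ (n + 1)).im| * |z.re| + |(z ^ (n + 1)).re| * |z.im| := by
            rw [abs_mul, abs_mul]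
        _ = _ := by rw [abs_of_nonneg hz]
    have hre : |z.re| ≤ ‖z‖ := Complex.abs_re_le_norm z
    have hre2 : |(z ^ (n + 1)).re| ≤ ‖z‖ ^ (n + 1) := by
      calc |(z ^ (n + 1)).re| ≤ ‖z ^ (n + 1)‖ := Complex.abs_re_le_norm _
        _ = ‖z‖ ^ (n + 1) := norm_pow _ _
    have habs : (0:ℝ) ≤ ‖z‖ := norm_nonneg z
    have him : |(z ^ (n + 1)).im| * |z.re| ≤ ((n + 1) * ‖z‖ ^ n * z.im) * ‖z‖ := by
      apply mul_le_mul ih hre (abs_nonneg _)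
      positivity
    have hp : ‖z‖ ^ (n + 1) = ‖z‖ ^ n * ‖z‖ := pow_succ _ _
    have hcomm : |(z ^ (n + 1)).re * z.im + (z ^ (n + 1)).im * z.re|
        = |(z ^ (n + 1)).im * z.re + (z ^ (n + 1)).re * z.im| := by rw [add_comm]
    have h5 : |(z ^ (n + 1)).re| * z.im ≤ ‖z‖ ^ n * ‖z‖ * z.im := by
      rw [← pow_succ]; exact mul_le_mul_of_nonneg_right hre2 hz
    rw [hcomm, hp]
    push_cast
    nlinarith [h2, him, h5]

/-- Let `(z_j)` be a countable family in the open upper half-plane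
with `|z_j| ≤ r₀` and `∑ Im z_j < ∞`. Then for every `n ≥ 1` the family `Im(z_j^{n+1})`
is absolutely summable and `∑_j |Im(z_j^{n+1})| ≤ (π/2)(n+1) r₀ⁿ ∑_j Im z_j`. -/
theorem stmt_12 {J : Type*} [Countable J] (z : J → ℂ) (r₀ : ℝ)
    (hz : ∀ j, 0 < (z j).im) (hr : ∀ j, ‖z j‖ ≤ r₀)
    (hs : Summable fun j => (z j).im) (n : ℕ) (hn : 1 ≤ n) :
    Summable (fun j => |((z j) ^ (n + 1)).im|) ∧
    ∑' j, |((z j) ^ (n + 1)).im| ≤ (π / 2) * (n + 1) * r₀ ^ n * ∑' j, (z j).im := by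
  have hpt : ∀ j, |((z j) ^ (n + 1)).im| ≤ (π / 2) * (n + 1) * r₀ ^ n * (z j).im := by
    intro j
    have h0 : (0:ℝ) ≤ (z j).im := (hz j).le
    have h1 := stmt_12_aux (z j) h0 n
    have hr0 : (0:ℝ) ≤ r₀ := le_trans (norm_nonneg _) (hr j)
    have h2 : ‖z j‖ ^ n ≤ r₀ ^ n := pow_le_pow_left₀ (norm_nonneg _) (hr j) n
    have h3 : ((n:ℝ) + 1) * ‖z j‖ ^ n * (z j).im ≤ ((n:ℝ) + 1) * r₀ ^ n * (z j).im := by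
      have : ((n:ℝ) + 1) * ‖z j‖ ^ n ≤ ((n:ℝ) + 1) * r₀ ^ n := by
        apply mul_le_mul_of_nonneg_left h2; positivity
      exact mul_le_mul_of_nonneg_right this h0
    have h4 : ((n:ℝ) + 1) * r₀ ^ n * (z j).im ≤ (π / 2) * (((n:ℝ) + 1) * r₀ ^ n * (z j).im) := by
      nlinarith [Real.pi_gt_three, mul_nonneg (mul_nonneg (by positivity : (0:ℝ) ≤ (n:ℝ)+1) (pow_nonneg hr0 n)) h0]
    calc |((z j) ^ (n + 1)).im| ≤ ((n:ℝ) + 1) * ‖z j‖ ^ n * (z j).im := by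
          exact_mod_cast h1
      _ ≤ ((n:ℝ) + 1) * r₀ ^ n * (z j).im := h3
      _ ≤ (π / 2) * (((n:ℝ) + 1) * r₀ ^ n * (z j).im) := h4
      _ = (π / 2) * (n + 1) * r₀ ^ n * (z j).im := by push_cast; ring
  have hsum2 : Summable (fun j => (π / 2) * (n + 1) * r₀ ^ n * (z j).im) :=
    hs.mul_left _
  have hsum : Summable (fun j => |((z j) ^ (n + 1)).im|) := by
    apply Summable.of_nonneg_of_le (fun j => abs_nonneg _) hpt hsum2
  refine ⟨hsum, ?_⟩
  calc ∑' j, |((z j) ^ (n + 1)).im| ≤ ∑' j, ((π / 2) * (n + 1) * r₀ ^ n * (z j).im) :=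
        Summable.tsum_le_tsum hpt hsum hsum2
    _ = (π / 2) * (n + 1) * r₀ ^ n * ∑' j, (z j).im := tsum_mul_left
end

section
/- Let (z_j)_{j∈J} be a countable family in ℂ₊ = {z ∈ ℂ : Im z > 0} with |z_j| ≤ r₀ for all j and ∑_j Im z_j < ∞. Then for every z ∈ ℂ with |z| > r₀ the infinite product B(z) = ∏_j (z − z_j)/(z − z̄_j) converges absolutely, the double series ∑_{n≥1} (2i/(n zⁿ)) ∑_j Im(z_jⁿ) converges absolutely, and B(z) = exp( − ∑_{n≥1} (2i/(n zⁿ)) ∑_j Im(z_jⁿ) ). -/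
open Complex Real

lemma im_pow_le_aux (r : ℝ) (hr : 0 ≤ r) (w : ℂ) (hw : ‖w‖ ≤ r) (m : ℕ) :
    |(w ^ (m + 1)).im| ≤ ((m : ℝ) + 1) * r ^ m * |w.im| := by
  have h2 : ∀ u : ℂ, ‖u - (starRingEnd ℂ) u‖ = 2 * |u.im| := by
    intro u
    rw [Complex.sub_conj]
    simp [Complex.norm_real, abs_mul]
  have key : w ^ (m + 1) - (starRingEnd ℂ) (w ^ (m + 1)) =
      (∑ i ∈ Finset.range (m + 1), w ^ i * ((starRingEnd ℂ) w) ^ (m + 1 - 1 - i)) *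
        (w - (starRingEnd ℂ) w) := by
    rw [geom_sum₂_mul, map_pow]
  have hsum : ‖∑ i ∈ Finset.range (m + 1),
      w ^ i * ((starRingEnd ℂ) w) ^ (m + 1 - 1 - i)‖ ≤ ((m : ℝ) + 1) * r ^ m := by
    refine (norm_sum_le _ _).trans ?_
    have hterm : ∀ i ∈ Finset.range (m + 1),
        ‖w ^ i * ((starRingEnd ℂ) w) ^ (m + 1 - 1 - i)‖ ≤ r ^ m := by
      intro i hi
      have him : i ≤ m := Nat.lt_succ_iff.mp (Finset.mem_range.mp hi)
      have h3 : m + 1 - 1 - i = m - i := by omega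
      rw [h3, norm_mul, norm_pow, norm_pow, Complex.norm_conj, ← pow_add,
        Nat.add_sub_cancel' him]
      exact pow_le_pow_left₀ (norm_nonneg w) hw m
    calc ∑ i ∈ Finset.range (m + 1),
          ‖w ^ i * ((starRingEnd ℂ) w) ^ (m + 1 - 1 - i)‖
        ≤ ∑ _i ∈ Finset.range (m + 1), r ^ m := Finset.sum_le_sum hterm
      _ = ((m : ℝ) + 1) * r ^ m := by
          rw [Finset.sum_const, Finset.card_range, nsmul_eq_mul]
          push_cast
          ring
  have hb : 2 * |(w ^ (m + 1)).im| ≤ ((m : ℝ) + 1) * r ^ m * (2 * |w.im|) := by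
    rw [← h2]
    rw [key, norm_mul, h2]
    gcongr
  nlinarith [abs_nonneg (w ^ (m + 1)).im, abs_nonneg w.im]

lemma hasSum_t_aux (k w : ℂ) (hw : ‖w‖ < ‖k‖) :
    HasSum (fun n : ℕ => (2 * I / (((n : ℂ) + 1) * k ^ (n + 1))) * (((w ^ (n + 1)).im : ℝ) : ℂ))
      (Complex.log (1 - (starRingEnd ℂ) w / k) - Complex.log (1 - w / k)) := by
  have hka : 0 < ‖k‖ := (norm_nonneg w).trans_lt hw
  have hk0 : k ≠ 0 := by
    intro h
    rw [h] at hka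
    simp at hka
  have hu : ‖w / k‖ < 1 := by
    rw [norm_div]
    exact (div_lt_one (by simpa using hka)).mpr hw
  have hv : ‖(starRingEnd ℂ) w / k‖ < 1 := by
    rw [norm_div, RCLike.norm_conj]
    exact (div_lt_one (by simpa using hka)).mpr hw
  have shift : ∀ u : ℂ, ‖u‖ < 1 →
      HasSum (fun n : ℕ => u ^ (n + 1) / ((n : ℂ) + 1)) (-Complex.log (1 - u)) := by
    intro u hu
    have h := Complex.hasSum_taylorSeries_neg_log hu
    have h' := (hasSum_nat_add_iff (f := fun n : ℕ => u ^ n / (n : ℂ)) 1).mpr (by simpa using h)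
    refine h'.congr_fun fun n => by push_cast; ring
  have h1 := shift _ hu
  have h2 := shift _ hv
  have h3 := h1.sub h2
  rw [neg_sub_neg] at h3
  refine h3.congr_fun fun n => ?_
  have hne : ((n : ℂ) + 1) ≠ 0 := by exact_mod_cast Nat.succ_ne_zero n
  have hiu : (2 * I) * (((w ^ (n + 1)).im : ℝ) : ℂ)
      = w ^ (n + 1) - ((starRingEnd ℂ) w) ^ (n + 1) := by
    rw [← map_pow, Complex.sub_conj]
    push_cast
    ring
  rw [div_pow, div_pow]
  field_simp
  linear_combination hiu

/-- Let `(z_j)` be a countable family in the open upper half-plane with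
`|z_j| ≤ r₀` and `∑ Im z_j < ∞`. Then for `|k| > r₀` the Blaschke product
`B(k) = ∏_j (k − z_j)/(k − z̄_j)` converges absolutely, the double series
`∑_{n≥1} (2i/(n kⁿ)) ∑_j Im(z_jⁿ)` converges absolutely, and
`B(k) = exp(−∑_{n≥1} (2i/(n kⁿ)) ∑_j Im(z_jⁿ))`. -/
theorem stmt_14 {J : Type*} [Countable J] (z : J → ℂ) (r₀ : ℝ)
    (hz : ∀ j, 0 < (z j).im) (hr : ∀ j, ‖z j‖ ≤ r₀)
    (hs : Summable fun j => (z j).im)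
    (k : ℂ) (hk : r₀ < ‖k‖) :
    Multipliable (fun j => (k - z j) / (k - (starRingEnd ℂ) (z j))) ∧
    Summable (fun j => ‖(k - z j) / (k - (starRingEnd ℂ) (z j)) - 1‖) ∧
    Summable (fun p : ℕ × J =>
      ‖(2 * I / (((p.1 : ℂ) + 1) * k ^ (p.1 + 1))) *
        (((z p.2 ^ (p.1 + 1)).im : ℝ) : ℂ)‖) ∧
    ∏' j, (k - z j) / (k - (starRingEnd ℂ) (z j)) =
      Complex.exp (- ∑' n : ℕ,
        (2 * I / (((n : ℂ) + 1) * k ^ (n + 1))) * (((∑' j, ((z j) ^ (n + 1)).im : ℝ)) : ℂ)) := by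
  rcases isEmpty_or_nonempty J with hJ | hJ
  · refine ⟨multipliable_empty, summable_empty, summable_empty, ?_⟩
    rw [tprod_empty]
    have h0 : ∀ n : ℕ, (2 * I / (((n : ℂ) + 1) * k ^ (n + 1))) *
        (((∑' j, ((z j) ^ (n + 1)).im : ℝ)) : ℂ) = 0 := by
      intro n
      rw [tsum_empty]
      simp
    rw [tsum_congr h0, tsum_zero, neg_zero, Complex.exp_zero]
  · obtain ⟨j₀⟩ := hJ
    have hr0 : 0 < r₀ :=
      (hz j₀).trans_le (((le_abs_self _).trans (Complex.abs_im_le_norm _)).trans (hr j₀))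
    set a : ℝ := ‖k‖ with ha_def
    have ha : 0 < a := hr0.trans hk
    have hk0 : k ≠ 0 := by
      intro h
      rw [ha_def, h] at ha
      simp at ha
    set t : ℕ → J → ℂ := fun n j =>
      (2 * I / (((n : ℂ) + 1) * k ^ (n + 1))) * (((z j ^ (n + 1)).im : ℝ) : ℂ) with ht_def
    have hwlt : ∀ j, ‖z j‖ < ‖k‖ := fun j => (hr j).trans_lt hk
    set c : J → ℂ := fun j =>
      Complex.log (1 - (starRingEnd ℂ) (z j) / k) - Complex.log (1 - z j / k) with hc_def
    have hts : ∀ j, HasSum (fun n => t n j) (c j) := fun j => hasSum_t_aux k (z j) (hwlt j)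
    set D : ℕ → ℝ := fun n => 2 * (r₀ / a) ^ n / a with hD_def
    have hq : r₀ / a < 1 := (div_lt_one ha).mpr hk
    have hq0 : 0 ≤ r₀ / a := by positivity
    have hD : Summable D := by
      have := (summable_geometric_of_lt_one hq0 hq).mul_left (2 / a)
      refine this.congr fun n => ?_
      rw [hD_def]
      ring
    have hDpos : ∀ n, 0 ≤ D n := fun n => by rw [hD_def]; positivity
    have hnt : ∀ n j, ‖t n j‖ ≤ D n * (z j).im := by
      intro n j
      have hcast : ((n : ℂ) + 1) = (((n : ℝ) + 1 : ℝ) : ℂ) := by push_cast; ring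
      have h1 : ‖t n j‖ =
          2 / (((n : ℝ) + 1) * a ^ (n + 1)) * |(z j ^ (n + 1)).im| := by
        rw [ht_def]
        simp only [norm_mul, norm_div, Complex.norm_real, Real.norm_eq_abs, Complex.norm_I, norm_pow, hcast]
        rw [_root_.abs_of_nonneg (by positivity : (0:ℝ) ≤ (n : ℝ) + 1), Complex.norm_two]
        ring
      have h3 : |(z j ^ (n + 1)).im| ≤ ((n : ℝ) + 1) * r₀ ^ n * |(z j).im| :=
        im_pow_le_aux r₀ hr0.le (z j) (hr j) n
      have h4 : ‖t n j‖ ≤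
          2 / (((n : ℝ) + 1) * a ^ (n + 1)) * (((n : ℝ) + 1) * r₀ ^ n * |(z j).im|) := by
        rw [h1]
        gcongr
      refine h4.trans_eq ?_
      rw [abs_of_pos (hz j), hD_def]
      have hn1 : (0:ℝ) < (n : ℝ) + 1 := by positivity
      field_simp
      rw [div_pow, pow_succ, mul_div_assoc', eq_div_iff (pow_ne_zero n ha.ne')]
      ring
    have hg : Summable (fun p : ℕ × J => D p.1 * (z p.2).im) :=
      hD.mul_of_nonneg hs hDpos fun j => (hz j).le
    have H3 : Summable (fun p : ℕ × J => ‖t p.1 p.2‖) :=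
      hg.of_nonneg_of_le (fun p => norm_nonneg _) (fun p => hnt p.1 p.2)
    have hT : Summable (fun p : ℕ × J => t p.1 p.2) :=
      Summable.of_norm H3
    have htnorm : ∀ j, Summable (fun n => ‖t n j‖) := fun j =>
      (hD.mul_right ((z j).im)).of_nonneg_of_le (fun n => norm_nonneg _)
        (fun n => hnt n j)
    have hcnorm : ∀ j, ‖c j‖ ≤ (∑' n, D n) * (z j).im := by
      intro j
      rw [← (hts j).tsum_eq]
      calc ‖∑' n, t n j‖ ≤ ∑' n, ‖t n j‖ :=
            norm_tsum_le_tsum_norm (htnorm j)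
        _ ≤ ∑' n, D n * (z j).im := by
            refine Summable.tsum_le_tsum (fun n => hnt n j)
              (htnorm j) (hD.mul_right _)
        _ = (∑' n, D n) * (z j).im := tsum_mul_right
    have hc : Summable c :=
      Summable.of_norm_bounded (hs.mul_left (∑' n, D n)) hcnorm
    -- denominators
    have hden : ∀ j, a - r₀ ≤ ‖k - (starRingEnd ℂ) (z j)‖ := by
      intro j
      have h1 : ‖k‖ - ‖(starRingEnd ℂ) (z j)‖ ≤ ‖k - (starRingEnd ℂ) (z j)‖ :=
        norm_sub_norm_le _ _
      rw [Complex.norm_conj] at h1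
      have := hr j
      calc a - r₀ ≤ a - ‖z j‖ := by linarith
        _ ≤ ‖k - (starRingEnd ℂ) (z j)‖ := h1
    have hden0 : ∀ j, k - (starRingEnd ℂ) (z j) ≠ 0 := by
      intro j h
      have h1 := hden j
      rw [h] at h1
      simp at h1
      linarith
    -- Summable (2)
    have hsum2 : Summable (fun j => ‖(k - z j) / (k - (starRingEnd ℂ) (z j)) - 1‖) := by
      refine (hs.mul_left (2 / (a - r₀))).of_nonneg_of_le
        (fun j => norm_nonneg _) (fun j => ?_)
      have hdj := hden j
      have hne := hden0 j
      have heq : (k - z j) / (k - (starRingEnd ℂ) (z j)) - 1 =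
          ((starRingEnd ℂ) (z j) - z j) / (k - (starRingEnd ℂ) (z j)) := by
        field_simp
        ring
      have him : ‖(starRingEnd ℂ) (z j) - z j‖ = 2 * (z j).im := by
        have h5 : (starRingEnd ℂ) (z j) - z j = -(((2 * (z j).im : ℝ) : ℂ) * I) := by
          rw [← Complex.sub_conj]
          ring
        rw [h5, norm_neg, norm_mul, Complex.norm_real, Complex.norm_I, mul_one, Real.norm_eq_abs,
          abs_mul, _root_.abs_two, abs_of_pos (hz j)]
      rw [heq, norm_div, him]
      have har : (0:ℝ) < a - r₀ := by linarith
      calc 2 * (z j).im / ‖k - (starRingEnd ℂ) (z j)‖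
          ≤ 2 * (z j).im / (a - r₀) := by
            gcongr
            exact mul_nonneg (by norm_num) (hz j).le
        _ = 2 / (a - r₀) * (z j).im := by ring
    -- factor = exp(-c j)
    have hfe : ∀ j, (k - z j) / (k - (starRingEnd ℂ) (z j)) = Complex.exp (-(c j)) := by
      intro j
      have h1 : (1 : ℂ) - z j / k ≠ 0 := by
        intro h
        rw [sub_eq_zero] at h
        have : ‖(z j) / k‖ < 1 := by
          rw [norm_div]
          exact (div_lt_one ha).mpr (hwlt j)
        rw [← h] at this
        simp at this
      have h2 : (1 : ℂ) - (starRingEnd ℂ) (z j) / k ≠ 0 := by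
        intro h
        rw [sub_eq_zero] at h
        have : ‖(starRingEnd ℂ) (z j) / k‖ < 1 := by
          rw [norm_div, Complex.norm_conj]
          exact (div_lt_one ha).mpr (hwlt j)
        rw [← h] at this
        simp at this
      rw [hc_def, neg_sub, Complex.exp_sub, Complex.exp_log h1, Complex.exp_log h2]
      rw [div_eq_div_iff (hden0 j) h2]
      field_simp
    have hprod : HasProd (fun j => (k - z j) / (k - (starRingEnd ℂ) (z j)))
        (Complex.exp (-∑' j, c j)) := by
      have h6 : HasSum (fun j => -(c j)) (-∑' j, c j) := hc.hasSum.neg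
      have h7 := h6.cexp
      exact HasProd.congr_fun h7 fun j => hfe j
    refine ⟨hprod.multipliable, hsum2, H3, ?_⟩
    rw [hprod.tprod_eq]
    congr 2
    have h5 : ∀ j, ∑' n, t n j = c j := fun j => (hts j).tsum_eq
    calc ∑' j, c j = ∑' (j) (n), t n j := tsum_congr fun j => (h5 j).symm
      _ = ∑' (n) (j), t n j := Summable.tsum_comm hT
      _ = ∑' n : ℕ, (2 * I / (((n : ℂ) + 1) * k ^ (n + 1))) *
            (((∑' j, ((z j) ^ (n + 1)).im : ℝ)) : ℂ) := by
          refine tsum_congr fun n => ?_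
          rw [ht_def]
          rw [tsum_mul_left, Complex.ofReal_tsum]
end

section
/- Let h : ℝ → ℝ be locally integrable, let I₀ ∈ ℝ, and set h₀(t) = t·h(t) − I₀. Assume h₀(t) → 0 as t → ±∞ and ∫_ℝ |h₀(t)| (1 + |t|)^{−a} dt < ∞ for some a < 1. Then: (1) the principal value J₀ = lim_{s→∞} (1/π)∫_{−s}^{s} h(t) dt exists; (2) for every k ∈ ℂ with Im k > 0 the principal value M(k) = lim_{s→∞} (1/π)∫_{−s}^{s} h(t)/(k − t) dt exists, the integral M₀(k) = (1/π)∫_ℝ h₀(t)/(k − t) dt converges absolutely, and M(k) = (J₀ − i I₀ + M₀(k))/k; (3) M₀(iτ) → 0 as τ → +∞. -/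
open MeasureTheory Filter Real Complex

open Topology

/-- An odd function has zero symmetric interval integral. -/
lemma aux_odd_int {f : ℝ → ℝ} (hf : ∀ t, f (-t) = - f t) (s : ℝ) :
    ∫ t in (-s)..s, f t = 0 := by
  have h1 : (∫ t in (-s)..s, f (-t)) = ∫ t in (-s)..s, f t := by
    simpa using intervalIntegral.integral_comp_neg (a := -s) (b := s) f
  have h2 : (∫ t in (-s)..s, f (-t)) = - ∫ t in (-s)..s, f t := by
    simp only [hf]
    exact intervalIntegral.integral_neg
  linarith [h1.symm.trans h2]

lemma aux_rpow_le {a t : ℝ} (ha : a ≤ 1) : (1 + |t|)⁻¹ ≤ (1 + |t|) ^ (-a) := by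
  have h1 : (1:ℝ) ≤ 1 + |t| := by simp [abs_nonneg]
  calc (1 + |t|)⁻¹ = (1 + |t|) ^ (-(1:ℝ)) := by rw [Real.rpow_neg_one]
    _ ≤ (1 + |t|) ^ (-a) := Real.rpow_le_rpow_of_exponent_le h1 (by linarith)

lemma aux_int_div {h₀ : ℝ → ℝ} (hm : AEStronglyMeasurable h₀ (volume : Measure ℝ)) {a : ℝ} (ha : a ≤ 1)
    (hint : Integrable (fun t : ℝ => |h₀ t| * (1 + |t|) ^ (-a))) :
    Integrable (fun t : ℝ => |h₀ t| / (1 + |t|)) := by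
  simp only [div_eq_mul_inv]
  refine hint.mono ?_ ?_
  · exact ((continuous_abs.comp_aestronglyMeasurable hm).mul
      (((continuous_const.add (_root_.continuous_abs : Continuous fun t : ℝ => |t|)).inv₀ (fun t => (by positivity : (1:ℝ) + |t| ≠ 0))).aestronglyMeasurable))
  · refine Eventually.of_forall fun t => ?_
    have h1 : (0:ℝ) < 1 + |t| := by positivity
    have h2 : (0:ℝ) ≤ |h₀ t| * (1 + |t|) ^ (-a) := by positivity
    rw [Real.norm_eq_abs, Real.norm_eq_abs, _root_.abs_of_nonneg (by positivity), _root_.abs_of_nonneg h2]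
    exact mul_le_mul_of_nonneg_left (aux_rpow_le ha) (abs_nonneg _)

lemma aux_k_ne {k : ℂ} (hk : 0 < k.im) (t : ℝ) : k - (t:ℂ) ≠ 0 := by
  intro hcon
  have : (k - (t:ℂ)).im = 0 := by rw [hcon]; simp
  simp only [Complex.sub_im, Complex.ofReal_im, sub_zero] at this
  linarith

lemma aux_abs_lb {k : ℂ} (hk : 0 < k.im) (t : ℝ) :
    1 + |t| ≤ ((1 + ‖k‖) / k.im + 1) * ‖k - t‖ := by
  have h1 : k.im ≤ ‖k - t‖ := by
    have := Complex.abs_im_le_norm (k - t)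
    simp only [Complex.sub_im, Complex.ofReal_im, sub_zero] at this
    exact (le_abs_self k.im).trans this
  have h2 : |t| - ‖k‖ ≤ ‖k - t‖ := by
    have h3 : ‖(t:ℂ)‖ - ‖k‖ ≤ ‖(t:ℂ) - k‖ := norm_sub_norm_le _ _
    rw [norm_sub_rev] at h3
    simpa [Complex.norm_real, Real.norm_eq_abs] using h3
  have hC : 1 + ‖k‖ ≤ (1 + ‖k‖) / k.im * ‖k - t‖ := by
    rw [div_mul_eq_mul_div, le_div_iff₀ hk]
    have hknn : (0:ℝ) ≤ 1 + ‖k‖ := by positivity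
    calc (1 + ‖k‖) * k.im ≤ (1 + ‖k‖) * ‖k - t‖ :=
          mul_le_mul_of_nonneg_left h1 hknn
      _ = (1 + ‖k‖) * ‖k - t‖ * 1 := by ring
      _ ≤ _ := by nlinarith [norm_nonneg (k - t), hknn]
  nlinarith [h1, h2, hC]

lemma aux_int_cplx {h₀ : ℝ → ℝ} (hm : AEStronglyMeasurable h₀ (volume : Measure ℝ))
    (hd : Integrable (fun t : ℝ => |h₀ t| / (1 + |t|))) {k : ℂ} (hk : 0 < k.im) :
    Integrable (fun t : ℝ => ((h₀ t : ℝ) : ℂ) / (k - (t : ℂ))) := by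
  set C : ℝ := (1 + ‖k‖) / k.im + 1 with hC
  have hCpos : 0 < C := by
    have h0 : (0:ℝ) ≤ (1 + ‖k‖) / k.im := div_nonneg (by positivity) hk.le
    rw [hC]; linarith
  refine Integrable.mono' (hd.const_mul C) ?_ ?_
  · simp only [div_eq_mul_inv]
    exact (Complex.continuous_ofReal.comp_aestronglyMeasurable hm).mul
      (((continuous_const.sub Complex.continuous_ofReal).inv₀
        (fun t => aux_k_ne hk t)).aestronglyMeasurable)
  · refine Eventually.of_forall fun t => ?_
    have habs : (0:ℝ) < ‖k - t‖ := by
      simpa [norm_pos_iff] using aux_k_ne hk t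
    have hb : 1 + |t| ≤ C * ‖k - t‖ := aux_abs_lb hk t
    have h1t : (0:ℝ) < 1 + |t| := by positivity
    rw [norm_div, Complex.norm_real, Real.norm_eq_abs]
    have key : |h₀ t| ≤ |h₀ t| / (1 + |t|) * (C * ‖k - t‖) := by
      have hmul := mul_le_mul_of_nonneg_left hb (div_nonneg (abs_nonneg (h₀ t)) h1t.le)
      rwa [div_mul_cancel₀ _ (ne_of_gt h1t)] at hmul
    rw [div_le_iff₀ habs]
    calc |h₀ t| ≤ |h₀ t| / (1 + |t|) * (C * ‖k - t‖) := key
      _ = C * (|h₀ t| / (1 + |t|)) * ‖k - t‖ := by ring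

lemma aux_part1 {h h₀ : ℝ → ℝ} (hloc : LocallyIntegrable h (volume : Measure ℝ)) {I₀ : ℝ}
    (hh₀ : ∀ t : ℝ, h₀ t = t * h t - I₀)
    (hm : AEStronglyMeasurable h₀ (volume : Measure ℝ))
    (hd : Integrable (fun t : ℝ => |h₀ t| / (1 + |t|))) :
    ∃ g : ℝ → ℝ, Integrable g ∧ ∀ s : ℝ, (∫ t in (-s)..s, h t) = ∫ t in (-s)..s, g t := by
  classical
  set g : ℝ → ℝ := fun t => if |t| ≤ 1 then h t else h₀ t / t with hg
  have hS : MeasurableSet {t : ℝ | |t| ≤ 1} := by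
    have : {t : ℝ | |t| ≤ 1} = Set.Icc (-1) 1 := by ext t; simp [abs_le]
    rw [this]; exact measurableSet_Icc
  -- integrable on |t| ≤ 1
  have hg1 : IntegrableOn g {t : ℝ | |t| ≤ 1} volume := by
    have hh : IntegrableOn h {t : ℝ | |t| ≤ 1} volume := by
      have : {t : ℝ | |t| ≤ 1} = Set.Icc (-1) 1 := by ext t; simp [abs_le]
      rw [this]; exact hloc.integrableOn_isCompact isCompact_Icc
    exact hh.congr_fun (fun t ht => by simp only [hg]; rw [if_pos (show |t| ≤ (1:ℝ) from ht)]) hS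
  -- integrable on |t| > 1
  have hg2 : IntegrableOn g {t : ℝ | |t| ≤ 1}ᶜ volume := by
    have hq : IntegrableOn (fun t : ℝ => h₀ t / t) {t : ℝ | |t| ≤ 1}ᶜ volume := by
      refine Integrable.mono' ((hd.const_mul 2).restrict) ?_ ?_
      · exact ((hm.mul (measurable_inv.aestronglyMeasurable)).congr
          (Eventually.of_forall fun t => (div_eq_mul_inv _ _).symm)).restrict
      · rw [ae_restrict_iff' hS.compl]
        refine Eventually.of_forall fun t ht => ?_
        have h1t : (1:ℝ) < |t| := by simpa using ht
        have ht0 : (0:ℝ) < |t| := by linarith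
        rw [Real.norm_eq_abs, abs_div]
        have h1pos : (0:ℝ) < 1 + |t| := by positivity
        have hmul := mul_le_mul_of_nonneg_left (show 1 + |t| ≤ 2 * |t| by linarith)
          (div_nonneg (abs_nonneg (h₀ t)) h1pos.le)
        rw [div_mul_cancel₀ _ (ne_of_gt h1pos)] at hmul
        rw [div_le_iff₀ ht0]
        calc |h₀ t| ≤ |h₀ t| / (1 + |t|) * (2 * |t|) := hmul
          _ = 2 * (|h₀ t| / (1 + |t|)) * |t| := by ring
    exact hq.congr_fun (fun t ht => by
      simp only [hg]; rw [if_neg (by simpa using ht)]) hS.compl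
  have hgint : Integrable g := by
    rw [← integrableOn_univ, ← Set.union_compl_self {t : ℝ | |t| ≤ 1}]
    exact hg1.union hg2
  refine ⟨g, hgint, fun s => ?_⟩
  have hIIh : IntervalIntegrable h volume (-s) s :=
    (hloc.integrableOn_isCompact isCompact_uIcc).intervalIntegrable
  have hIIg : IntervalIntegrable g volume (-s) s := hgint.intervalIntegrable
  have hodd : ∀ t : ℝ, (fun t => h t - g t) (-t) = - (fun t => h t - g t) t := by
    intro t
    simp only [hg]
    by_cases hc : |t| ≤ 1
    · rw [if_pos (by simpa using hc), if_pos hc]; ring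
    · push_neg at hc
      have ht0 : t ≠ 0 := by intro h0; rw [h0] at hc; simp at hc; linarith
      rw [if_neg (by simpa using hc.not_ge), if_neg (by simpa using hc.not_ge)]
      have key : ∀ u : ℝ, u ≠ 0 → h₀ u / u = h u - I₀ / u := by
        intro u hu; rw [hh₀]; field_simp
      rw [key t ht0, key (-t) (neg_ne_zero.2 ht0)]
      ring
  have hzero : (∫ t in (-s)..s, (h t - g t)) = 0 := aux_odd_int hodd s
  have hsub := intervalIntegral.integral_sub hIIh hIIg
  rw [hsub] at hzero
  linarith

lemma aux_pv_const {k : ℂ} (hk : 0 < k.im) :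
    Tendsto (fun s : ℝ => ∫ t in (-s)..s, (k - (t:ℂ))⁻¹) atTop (𝓝 (-((π:ℂ) * I))) := by
  have hcont : Continuous fun t : ℝ => (k - (t:ℂ))⁻¹ :=
    (continuous_const.sub Complex.continuous_ofReal).inv₀ (fun t => aux_k_ne hk t)
  have hderiv : ∀ t : ℝ, HasDerivAt (fun u : ℝ => -Complex.log (k - u)) ((k - (t:ℂ))⁻¹) t := by
    intro t
    have hmem : k - (t:ℂ) ∈ Complex.slitPlane := by
      rw [Complex.mem_slitPlane_iff]
      right
      simp only [Complex.sub_im, Complex.ofReal_im, sub_zero]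
      exact ne_of_gt hk
    have hinner : HasDerivAt (fun z : ℂ => k - z) (-1) (t:ℂ) :=
      (hasDerivAt_id ((t:ℂ))).const_sub k
    have hlog : HasDerivAt (fun z : ℂ => Complex.log (k - z)) ((k - (t:ℂ))⁻¹ * (-1)) (t:ℂ) :=
      (Complex.hasDerivAt_log hmem).comp _ hinner
    have := (hlog.comp_ofReal).neg
    exact this.congr_deriv (by ring)
  have hfor : ∀ s : ℝ, (∫ t in (-s)..s, (k - (t:ℂ))⁻¹)
      = Complex.log (k + s) - Complex.log (k - s) := by
    intro s
    rw [intervalIntegral.integral_eq_sub_of_hasDerivAt (fun t _ => hderiv t)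
      (hcont.intervalIntegrable _ _)]
    push_cast
    ring_nf
  have T1 : Tendsto (fun s : ℝ => k / (s:ℂ)) atTop (𝓝 0) := by
    have h1 : Tendsto (fun s : ℝ => ((s⁻¹ : ℝ) : ℂ)) atTop (𝓝 0) := by
      have := (Complex.continuous_ofReal.tendsto 0).comp tendsto_inv_atTop_zero
      simpa [Function.comp_def] using this
    have := h1.const_mul k
    simp only [mul_zero] at this
    refine this.congr fun s => ?_
    rw [Complex.ofReal_inv]; ring
  have T2 : Tendsto (fun s : ℝ => Complex.log (k / s + 1)) atTop (𝓝 0) := by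
    have hc : ContinuousAt Complex.log 1 := continuousAt_clog Complex.one_mem_slitPlane
    have h2 := T1.add_const 1
    rw [zero_add] at h2
    have := hc.tendsto.comp h2
    simpa [Function.comp_def, Complex.log_one] using this
  have T3 : Tendsto (fun s : ℝ => Complex.log (k / s - 1)) atTop (𝓝 ((π:ℂ) * I)) := by
    have hz := Complex.tendsto_log_nhdsWithin_im_nonneg_of_re_neg_of_im_zero
      (z := -1) (by norm_num) (by norm_num)
    have hlim : Tendsto (fun s : ℝ => k / s - 1) atTop (𝓝[{z : ℂ | 0 ≤ z.im}] (-1)) := by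
      rw [tendsto_nhdsWithin_iff]
      constructor
      · have h3 := T1.sub_const 1
        rw [zero_sub] at h3
        exact h3
      · filter_upwards [eventually_gt_atTop (0:ℝ)] with s hs
        simp only [Set.mem_setOf_eq, Complex.sub_im, Complex.one_im, sub_zero,
          Complex.div_ofReal_im]
        positivity
    have := hz.comp hlim
    simpa [Function.comp_def] using this
  have key : Tendsto (fun s : ℝ => Complex.log (k / s + 1) - Complex.log (k / s - 1))
      atTop (𝓝 (-((π:ℂ) * I))) := by
    have := T2.sub T3
    simpa using this
  refine Tendsto.congr' ?_ key
  filter_upwards [eventually_gt_atTop (0:ℝ)] with s hs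
  have hs0 : ((s:ℝ):ℂ) ≠ 0 := by
    simpa using ne_of_gt hs
  have him : ∀ c : ℝ, (k / s + (c:ℂ)).im = k.im / s := by
    intro c; simp [Complex.div_ofReal_im]
  have hx1 : k / s + 1 ≠ 0 := by
    intro hcon
    have : (k / s + 1).im = 0 := by rw [hcon]; simp
    rw [show (1:ℂ) = ((1:ℝ):ℂ) by norm_num, him 1] at this
    have := div_ne_zero (ne_of_gt hk) (ne_of_gt hs)
    exact this ‹k.im / s = 0›
  have hx2 : k / s - 1 ≠ 0 := by
    intro hcon
    have : (k / s - 1).im = 0 := by rw [hcon]; simp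
    simp only [Complex.sub_im, Complex.one_im, sub_zero, Complex.div_ofReal_im] at this
    exact div_ne_zero (ne_of_gt hk) (ne_of_gt hs) this
  have e1 : k + s = (s:ℂ) * (k / s + 1) := by
    field_simp
  have e2 : k - s = (s:ℂ) * (k / s - 1) := by
    field_simp
  rw [hfor s, e1, e2, Complex.log_ofReal_mul hs hx1, Complex.log_ofReal_mul hs hx2]
  ring

lemma aux_ne_zero_iu (τ : ℝ) (hτ : 0 < τ) (t : ℝ) : Complex.I * τ - (t:ℂ) ≠ 0 := by
  intro hcon
  have : (Complex.I * τ - (t:ℂ)).im = 0 := by rw [hcon]; simp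
  simp only [Complex.sub_im, Complex.mul_im, Complex.I_re, Complex.I_im, Complex.ofReal_re,
    Complex.ofReal_im, zero_mul, one_mul, mul_zero, add_zero, zero_add, sub_zero] at this
  linarith

lemma aux_abs_iu_im (τ t : ℝ) : τ ≤ ‖Complex.I * τ - (t:ℂ)‖ := by
  have h := Complex.abs_im_le_norm (Complex.I * τ - (t:ℂ))
  simp only [Complex.sub_im, Complex.mul_im, Complex.I_re, Complex.I_im, Complex.ofReal_re,
    Complex.ofReal_im, zero_mul, one_mul, mul_zero, add_zero, zero_add, sub_zero] at h
  exact (le_abs_self τ).trans h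

lemma aux_abs_iu_re (τ t : ℝ) : |t| ≤ ‖Complex.I * τ - (t:ℂ)‖ := by
  have h := Complex.abs_re_le_norm (Complex.I * τ - (t:ℂ))
  simp only [Complex.sub_re, Complex.mul_re, Complex.I_re, Complex.I_im, Complex.ofReal_re,
    Complex.ofReal_im, zero_mul, one_mul, mul_zero, sub_zero, zero_sub, abs_neg,
    mul_one, zero_mul] at h
  simpa using h

lemma aux_part3 {h₀ : ℝ → ℝ} (hm : AEStronglyMeasurable h₀ (volume : Measure ℝ)) {a : ℝ}
    (ha : a ≤ 1) (hint : Integrable (fun t : ℝ => |h₀ t| * (1 + |t|) ^ (-a))) :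
    Tendsto (fun τ : ℝ => ∫ t : ℝ, ((h₀ t : ℝ) : ℂ) / (Complex.I * (τ:ℂ) - (t:ℂ)))
      atTop (𝓝 0) := by
  have h0 : (0:ℂ) = ∫ t : ℝ, (0:ℂ) := by simp
  rw [h0]
  refine tendsto_integral_filter_of_dominated_convergence
    (fun t => 2 * (|h₀ t| * (1 + |t|) ^ (-a))) ?_ ?_ (hint.const_mul 2) ?_
  · filter_upwards [eventually_ge_atTop (1:ℝ)] with τ hτ
    have heq : (fun t : ℝ => ((h₀ t : ℝ) : ℂ) / (Complex.I * (τ:ℂ) - (t:ℂ)))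
        = fun t : ℝ => ((h₀ t : ℝ) : ℂ) * (Complex.I * (τ:ℂ) - (t:ℂ))⁻¹ :=
      funext fun t => div_eq_mul_inv _ _
    rw [heq]
    exact (Complex.continuous_ofReal.comp_aestronglyMeasurable hm).mul
      (((continuous_const.sub Complex.continuous_ofReal).inv₀
        (fun t => aux_ne_zero_iu τ (by linarith) t)).aestronglyMeasurable)
  · filter_upwards [eventually_ge_atTop (1:ℝ)] with τ hτ
    refine Eventually.of_forall fun t => ?_
    have habs : (0:ℝ) < ‖Complex.I * τ - (t:ℂ)‖ :=
      lt_of_lt_of_le (by linarith) (aux_abs_iu_im τ t)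
    have h1t : (0:ℝ) < 1 + |t| := by positivity
    rw [norm_div, Complex.norm_real, Real.norm_eq_abs]
    have hb : 1 + |t| ≤ 2 * ‖Complex.I * τ - (t:ℂ)‖ := by
      have h1 := aux_abs_iu_im τ t
      have h2 := aux_abs_iu_re τ t
      linarith
    have step1 : |h₀ t| / ‖Complex.I * τ - (t:ℂ)‖ ≤ 2 * (|h₀ t| / (1 + |t|)) := by
      rw [div_le_iff₀ habs]
      have hmul := mul_le_mul_of_nonneg_left hb (div_nonneg (abs_nonneg (h₀ t)) h1t.le)
      rw [div_mul_cancel₀ _ (ne_of_gt h1t)] at hmul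
      calc |h₀ t| ≤ |h₀ t| / (1 + |t|) * (2 * ‖Complex.I * τ - (t:ℂ)‖) := hmul
        _ = 2 * (|h₀ t| / (1 + |t|)) * ‖Complex.I * τ - (t:ℂ)‖ := by ring
    refine step1.trans ?_
    have := aux_rpow_le (t := t) ha
    have h2 : |h₀ t| / (1 + |t|) ≤ |h₀ t| * (1 + |t|) ^ (-a) := by
      rw [div_eq_mul_inv]
      exact mul_le_mul_of_nonneg_left this (abs_nonneg _)
    linarith
  · refine Eventually.of_forall fun t => ?_
    refine squeeze_zero_norm' (a := fun τ : ℝ => |h₀ t| * τ⁻¹) ?_ ?_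
    · filter_upwards [eventually_ge_atTop (1:ℝ)] with τ hτ
      have habs : (0:ℝ) < ‖Complex.I * τ - (t:ℂ)‖ :=
        lt_of_lt_of_le (by linarith) (aux_abs_iu_im τ t)
      rw [norm_div, Complex.norm_real, Real.norm_eq_abs]
      calc |h₀ t| / ‖Complex.I * τ - (t:ℂ)‖ ≤ |h₀ t| / τ :=
            div_le_div_of_nonneg_left ?_ ?_ ?_ |>.trans (le_refl _)
        _ = |h₀ t| * τ⁻¹ := div_eq_mul_inv _ _
      · exact abs_nonneg _
      · linarith
      · exact aux_abs_iu_im τ t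
    · have := tendsto_inv_atTop_zero.const_mul |h₀ t|
      simpa using this

/-- Let `h : ℝ → ℝ` be locally integrable, `I₀ ∈ ℝ`, and
`h₀(t) = t·h(t) − I₀`. Assume `h₀(t) → 0` as `t → ±∞` and
`∫ |h₀(t)|(1+|t|)^{−a} dt < ∞` for some `a < 1`. Then: (1) the principal value
`J₀ = lim_{s→∞} (1/π)∫_{−s}^s h` exists; (2) for each `k` with `Im k > 0` the
principal value `M(k) = lim_{s→∞} (1/π)∫_{−s}^s h(t)/(k−t) dt` exists, the integral
`M₀(k) = (1/π)∫ h₀(t)/(k−t) dt` converges absolutely, and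
`M(k) = (J₀ − iI₀ + M₀(k))/k`; (3) `M₀(iτ) → 0` as `τ → +∞`. -/
theorem stmt_18 (h : ℝ → ℝ) (hloc : LocallyIntegrable h volume) (I₀ : ℝ)
    (h₀ : ℝ → ℝ) (hh₀ : ∀ t : ℝ, h₀ t = t * h t - I₀)
    (htop : Tendsto h₀ atTop (nhds 0)) (hbot : Tendsto h₀ atBot (nhds 0))
    (a : ℝ) (ha : a < 1)
    (hint : Integrable (fun t : ℝ => |h₀ t| * (1 + |t|) ^ (-a))) :
    ∃ J₀ : ℝ,
      Tendsto (fun s : ℝ => (1 / π) * ∫ t in (-s)..s, h t) atTop (nhds J₀) ∧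
      (∀ k : ℂ, 0 < k.im →
        Integrable (fun t : ℝ => ((h₀ t : ℝ) : ℂ) / (k - (t : ℂ))) ∧
        Tendsto (fun s : ℝ => (1 / (π : ℂ)) * ∫ t in (-s)..s, ((h t : ℝ) : ℂ) / (k - (t : ℂ)))
          atTop
          (nhds (((J₀ : ℂ) - I * (I₀ : ℂ) +
            (1 / (π : ℂ)) * ∫ t : ℝ, ((h₀ t : ℝ) : ℂ) / (k - (t : ℂ))) / k))) ∧
      Tendsto (fun τ : ℝ =>
          (1 / (π : ℂ)) * ∫ t : ℝ, ((h₀ t : ℝ) : ℂ) / (I * (τ : ℂ) - (t : ℂ)))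
        atTop (nhds 0) := by
  have hmh : AEStronglyMeasurable h volume := hloc.aestronglyMeasurable
  have hm : AEStronglyMeasurable h₀ volume := by
    have he : h₀ = fun t => t * h t - I₀ := funext hh₀
    rw [he]
    exact (aestronglyMeasurable_id.mul hmh).sub aestronglyMeasurable_const
  have hd : Integrable (fun t : ℝ => |h₀ t| / (1 + |t|)) := aux_int_div hm ha.le hint
  obtain ⟨g, hgint, hgeq⟩ := aux_part1 hloc hh₀ hm hd
  set J₀ : ℝ := (1 / π) * ∫ t, g t with hJ
  have hglim : Tendsto (fun s : ℝ => ∫ t in (-s)..s, g t) atTop (𝓝 (∫ t, g t)) :=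
    intervalIntegral_tendsto_integral hgint tendsto_neg_atTop_atBot tendsto_id
  have hhlim : Tendsto (fun s : ℝ => ∫ t in (-s)..s, h t) atTop (𝓝 (∫ t, g t)) :=
    hglim.congr fun s => (hgeq s).symm
  refine ⟨J₀, ?_, ?_, ?_⟩
  · simpa [hJ] using hhlim.const_mul (1/π)
  · intro k hk
    have hMint : Integrable (fun t : ℝ => ((h₀ t : ℝ) : ℂ) / (k - (t:ℂ))) :=
      aux_int_cplx hm hd hk
    refine ⟨hMint, ?_⟩
    have hk0 : k ≠ 0 := by
      intro hcon; rw [hcon] at hk; simp at hk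
    have hπ : ((π:ℝ):ℂ) ≠ 0 := by
      simpa using Real.pi_ne_zero
    -- pointwise identity
    have hid : ∀ t : ℝ, ((h t : ℝ) : ℂ) / (k - (t:ℂ))
        = (1/k) * ((h t : ℝ):ℂ) + (1/k) * (((h₀ t : ℝ):ℂ) / (k - (t:ℂ)))
          + ((I₀:ℝ):ℂ)/k * (k - (t:ℂ))⁻¹ := by
      intro t
      have hne := aux_k_ne hk t
      have hcast : ((h₀ t : ℝ):ℂ) = (t:ℂ) * ((h t:ℝ):ℂ) - ((I₀:ℝ):ℂ) := by
        rw [hh₀]; push_cast; ring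
      rw [hcast]
      field_simp
      ring
    -- interval integrability
    have hIIhC : ∀ s : ℝ, IntervalIntegrable (fun t : ℝ => ((h t:ℝ):ℂ)) volume (-s) s := by
      intro s
      have h1 : IntervalIntegrable h volume (-s) s :=
        (hloc.integrableOn_isCompact isCompact_uIcc).intervalIntegrable
      rw [intervalIntegrable_iff] at h1 ⊢
      exact h1.ofReal
    have hcont : Continuous fun t : ℝ => (k - (t:ℂ))⁻¹ :=
      (continuous_const.sub Complex.continuous_ofReal).inv₀ (fun t => aux_k_ne hk t)
    have hsplit : ∀ s : ℝ, (∫ t in (-s)..s, ((h t:ℝ):ℂ) / (k - (t:ℂ)))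
        = (1/k) * (∫ t in (-s)..s, ((h t:ℝ):ℂ))
          + (1/k) * (∫ t in (-s)..s, ((h₀ t:ℝ):ℂ) / (k - (t:ℂ)))
          + ((I₀:ℝ):ℂ)/k * (∫ t in (-s)..s, (k - (t:ℂ))⁻¹) := by
      intro s
      have i1 : IntervalIntegrable (fun t : ℝ => (1/k) * ((h t:ℝ):ℂ)) volume (-s) s :=
        (hIIhC s).const_mul _
      have i2 : IntervalIntegrable (fun t : ℝ => (1/k) * (((h₀ t:ℝ):ℂ) / (k - (t:ℂ))))
          volume (-s) s := (hMint.intervalIntegrable.const_mul _)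
      have i3 : IntervalIntegrable (fun t : ℝ => ((I₀:ℝ):ℂ)/k * (k - (t:ℂ))⁻¹) volume (-s) s :=
        ((hcont.intervalIntegrable _ _).const_mul _)
      calc (∫ t in (-s)..s, ((h t:ℝ):ℂ) / (k - (t:ℂ)))
          = ∫ t in (-s)..s, ((1/k) * ((h t:ℝ):ℂ) + (1/k) * (((h₀ t:ℝ):ℂ)/(k - (t:ℂ)))
              + ((I₀:ℝ):ℂ)/k * (k - (t:ℂ))⁻¹) :=
            intervalIntegral.integral_congr (fun t _ => hid t)
        _ = _ := by
            rw [intervalIntegral.integral_add (i1.add i2) i3,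
              intervalIntegral.integral_add i1 i2,
              intervalIntegral.integral_const_mul, intervalIntegral.integral_const_mul,
              intervalIntegral.integral_const_mul]
    have L1 : Tendsto (fun s : ℝ => ∫ t in (-s)..s, ((h t:ℝ):ℂ)) atTop
        (𝓝 (((∫ t, g t : ℝ) : ℂ))) := by
      have hcomp := (Complex.continuous_ofReal.tendsto _).comp hhlim
      refine hcomp.congr fun s => ?_
      simp only [Function.comp_apply]
      exact (intervalIntegral.integral_ofReal).symm
    have L2 : Tendsto (fun s : ℝ => ∫ t in (-s)..s, ((h₀ t:ℝ):ℂ) / (k - (t:ℂ))) atTop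
        (𝓝 (∫ t : ℝ, ((h₀ t:ℝ):ℂ) / (k - (t:ℂ)))) :=
      intervalIntegral_tendsto_integral hMint tendsto_neg_atTop_atBot tendsto_id
    have L3 := aux_pv_const hk
    have T : Tendsto (fun s : ℝ => ∫ t in (-s)..s, ((h t:ℝ):ℂ) / (k - (t:ℂ))) atTop
        (𝓝 ((1/k) * ((∫ t, g t : ℝ):ℂ)
          + (1/k) * (∫ t : ℝ, ((h₀ t:ℝ):ℂ)/(k - (t:ℂ)))
          + ((I₀:ℝ):ℂ)/k * (-((π:ℂ) * I)))) := by
      refine Tendsto.congr (fun s => (hsplit s).symm) ?_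
      exact ((L1.const_mul _).add (L2.const_mul _)).add (L3.const_mul _)
    have hval : (1/(π:ℂ)) * ((1/k) * ((∫ t, g t : ℝ):ℂ)
          + (1/k) * (∫ t : ℝ, ((h₀ t:ℝ):ℂ)/(k - (t:ℂ)))
          + ((I₀:ℝ):ℂ)/k * (-((π:ℂ) * I)))
        = (((J₀:ℝ):ℂ) - I * ((I₀:ℝ):ℂ)
            + (1/(π:ℂ)) * ∫ t : ℝ, ((h₀ t:ℝ):ℂ)/(k - (t:ℂ)))/k := by
      have hJc : ((J₀:ℝ):ℂ) = (1/(π:ℂ)) * ((∫ t, g t : ℝ):ℂ) := by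
        rw [hJ]; push_cast; ring
      rw [hJc]
      field_simp
      ring
    have Tfin := T.const_mul (1/(π:ℂ))
    rw [hval] at Tfin
    exact Tfin
  · have := (aux_part3 hm ha.le hint).const_mul (1/(π:ℂ))
    simpa using this
end

section
/- Let m ≥ 0 be an integer, let h : ℝ → ℝ be locally integrable and let I₀, I₁, …, I_m ∈ ℝ. For 0 ≤ j ≤ m set P_j(t) = ∑_{i=0}^{j} I_i/t^{i+1} and h_j(t) = t^{j+1}(h(t) − P_j(t)), and set h_{−1} = h. Assume h_m(t) → 0 as t → ±∞ and ∫_ℝ |h_m(t)| (1 + |t|)^{−a} dt < ∞ for some a < 1. Then: (1) for each j = 0, 1, …, m the principal value 𝒥_j = lim_{s→∞} (1/π)∫_{−s}^{s} h_{j−1}(t) dt exists; (2) for every k ∈ ℂ with Im k > 0, the principal value M(k) = lim_{s→∞} (1/π)∫_{−s}^{s} h(t)/(k − t) dt exists and M(k) = ∑_{j=0}^{m} (𝒥_j − i I_j)/k^{j+1} + M_m(k)/k^{m+1}, where M_m(k) = (1/π)∫_ℝ h_m(t)/(k − t) dt converges absolutely; (3) M_m(iτ) → 0 as τ → +∞.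 -/
open MeasureTheory Filter Real

noncomputable section Stmt19Aux

namespace Stmt19

variable (h : ℝ → ℝ) (Iseq : ℕ → ℝ)

/-- `ffn j t = t^j (h t - ∑_{i<j} I_i/t^{i+1})`, i.e. `h_{j-1}` of the paper. -/
def ffn (j : ℕ) (t : ℝ) : ℝ :=
  t ^ j * (h t - ∑ i ∈ Finset.range j, Iseq i / t ^ (i + 1))

lemma ffn_zero (t : ℝ) : ffn h Iseq 0 t = h t := by simp [ffn]

lemma ffn_succ (j : ℕ) {t : ℝ} (ht : t ≠ 0) :
    ffn h Iseq (j + 1) t = t * ffn h Iseq j t - Iseq j := by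
  have hpow : t ^ (j + 1) ≠ 0 := pow_ne_zero _ ht
  simp only [ffn, Finset.sum_range_succ]
  field_simp
  ring

end Stmt19

open Stmt19

/-- key elementary inequality : `1/|t| ≤ 2 (1+|t|)^(-a)` for `|t| ≥ 1`, `a < 1`. -/
lemma stmt19_inv_le {a : ℝ} (ha : a < 1) {t : ℝ} (ht : 1 ≤ |t|) :
    1 / |t| ≤ 2 * (1 + |t|) ^ (-a) := by
  have h1 : (0:ℝ) < |t| := lt_of_lt_of_le one_pos ht
  have hb : (1:ℝ) ≤ 1 + |t| := by linarith
  have key : (1 + |t|) ^ a ≤ 2 * |t| := by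
    rcases le_or_gt a 0 with h | h
    · calc (1 + |t|) ^ a ≤ 1 := Real.rpow_le_one_of_one_le_of_nonpos hb h
        _ ≤ 2 * |t| := by linarith
    · calc (1 + |t|) ^ a ≤ (2 * |t|) ^ a :=
            Real.rpow_le_rpow (by positivity) (by linarith) h.le
        _ ≤ (2 * |t|) ^ (1:ℝ) :=
            Real.rpow_le_rpow_of_exponent_le (by linarith) (by linarith)
        _ = 2 * |t| := Real.rpow_one _
  have hpos : (0:ℝ) < (1 + |t|) ^ a := Real.rpow_pos_of_pos (by linarith) a
  rw [Real.rpow_neg (by positivity)]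
  have h2 : 1 / |t| ≤ 2 / ((1 + |t|) ^ a) := by
    rw [div_le_div_iff₀ h1 hpos]; linarith
  calc 1 / |t| ≤ 2 / ((1 + |t|) ^ a) := h2
    _ = 2 * ((1 + |t|) ^ a)⁻¹ := by rw [div_eq_mul_inv]

/-- symmetric integral of the odd cut-off of `1/t` vanishes. -/
lemma stmt19_odd_integral (s : ℝ) :
    (∫ t in (-s)..s, (if |t| < 1 then (0:ℝ) else 1 / t)) = 0 := by
  set u : ℝ → ℝ := fun t => if |t| < 1 then (0:ℝ) else 1 / t with hu
  have hodd : ∀ t, u (-t) = -u t := by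
    intro t
    by_cases hlt : |t| < 1 <;> simp [hu, abs_neg, hlt, one_div, inv_neg]
  have hcn := intervalIntegral.integral_comp_neg (a := -s) (b := s) (f := u)
  simp only [hodd, intervalIntegral.integral_neg, neg_neg] at hcn
  have : ∫ t in (-s)..s, u t = 0 := by linarith
  exact this

/-- the symmetric principal value of `∫ dt/(k - t)` is `-π i` when `Im k > 0`. -/
lemma stmt19_tendsto_inv (k : ℂ) (hk : 0 < k.im) :
    Tendsto (fun s : ℝ => ∫ t in (-s)..s, (k - (t:ℂ))⁻¹) atTop
      (nhds (-(π : ℂ) * Complex.I)) := by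
  have hkt : ∀ t : ℝ, k - (t:ℂ) ≠ 0 := by
    intro t hz
    have h1 : (k - (t:ℂ)).im = k.im := by simp
    rw [hz] at h1
    simp at h1
    linarith
  have hkt' : ∀ t : ℝ, (t:ℂ) - k ≠ 0 := by
    intro t hz
    have h1 : (t:ℂ) = k := sub_eq_zero.mp hz
    exact hkt t (by rw [← h1, sub_self])
  have hcont : Continuous fun t : ℝ => (k - (t:ℂ))⁻¹ :=
    (continuous_const.sub Complex.continuous_ofReal).inv₀ hkt
  have heval : ∀ s : ℝ, (∫ t in (-s)..s, (k - (t:ℂ))⁻¹)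
      = Complex.log (k + s) - Complex.log (k - s) := by
    intro s
    have hder : ∀ t ∈ Set.uIcc (-s) s,
        HasDerivAt (fun u : ℝ => -Complex.log (k - (u:ℂ))) ((k - (t:ℂ))⁻¹) t := by
      intro t _
      have hmem : (k - (t:ℂ)) ∈ Complex.slitPlane := by
        rw [Complex.mem_slitPlane_iff]
        right
        simp
        linarith
      have hlin : HasDerivAt (fun z : ℂ => k - z) (-1) (t:ℂ) := (hasDerivAt_id _).const_sub k
      have hcomp := (Complex.hasDerivAt_log hmem).comp (t:ℂ) hlin
      have : HasDerivAt (fun z : ℂ => -Complex.log (k - z)) ((k - (t:ℂ))⁻¹) (t:ℂ) := by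
        have h2 := hcomp.neg
        simp only [Function.comp_def, mul_neg, mul_one, neg_neg] at h2
        exact h2
      simpa using this.comp_ofReal
    rw [intervalIntegral.integral_eq_sub_of_hasDerivAt hder (hcont.intervalIntegrable _ _)]
    push_cast
    ring
  have hs0 : Tendsto (fun s : ℝ => k / (s:ℂ)) atTop (nhds 0) := by
    have h1 : Tendsto (fun s : ℝ => (s:ℝ)⁻¹) atTop (nhds 0) := tendsto_inv_atTop_zero
    have h2 : Tendsto (fun s : ℝ => (((s:ℝ)⁻¹ : ℝ) : ℂ)) atTop (nhds 0) := by
      have := (Complex.continuous_ofReal.tendsto (0:ℝ)).comp h1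
      simpa [Function.comp_def] using this
    have h3 := h2.const_mul k
    simpa [div_eq_mul_inv, Complex.ofReal_inv] using h3
  have hq1 : Tendsto (fun s : ℝ => k / (s:ℂ) + 1) atTop (nhds 1) := by
    simpa using hs0.add (tendsto_const_nhds (x := (1:ℂ)))
  have hq2 : Tendsto (fun s : ℝ => 1 - k / (s:ℂ)) atTop (nhds 1) := by
    simpa using (tendsto_const_nhds (x := (1:ℂ))).sub hs0
  have hargc : ContinuousAt Complex.arg 1 :=
    Complex.continuousAt_arg (Complex.mem_slitPlane_iff.2 (Or.inl (by simp)))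
  have harg1 : Tendsto (fun s : ℝ => Complex.arg (k + s)) atTop (nhds 0) := by
    have h1 : Tendsto (fun s : ℝ => Complex.arg (k / s + 1)) atTop (nhds 0) := by
      have := hargc.tendsto.comp hq1
      simpa [Complex.arg_one, Function.comp_def] using this
    refine h1.congr' ?_
    filter_upwards [eventually_gt_atTop (0:ℝ)] with s hs
    have hs' : (s:ℂ) ≠ 0 := by exact_mod_cast ne_of_gt hs
    have : k + (s:ℂ) = (s:ℝ) * (k / s + 1) := by field_simp
    rw [this, Complex.arg_real_mul _ hs]
  have haux : Tendsto (fun s : ℝ => Complex.arg ((s:ℂ) - k)) atTop (nhds 0) := by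
    have h1 : Tendsto (fun s : ℝ => Complex.arg (1 - k / s)) atTop (nhds 0) := by
      have := hargc.tendsto.comp hq2
      simpa [Complex.arg_one, Function.comp_def] using this
    refine h1.congr' ?_
    filter_upwards [eventually_gt_atTop (0:ℝ)] with s hs
    have hs' : (s:ℂ) ≠ 0 := by exact_mod_cast ne_of_gt hs
    have : (s:ℂ) - k = (s:ℝ) * (1 - k / s) := by field_simp
    rw [this, Complex.arg_real_mul _ hs]
  have harg2 : Tendsto (fun s : ℝ => Complex.arg (k - s)) atTop (nhds π) := by
    have hrw : ∀ s : ℝ, Complex.arg (k - s) = Complex.arg ((s:ℂ) - k) + π := by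
      intro s
      have him : 0 < (k - (s:ℂ)).im := by simp [hk]
      have := Complex.arg_neg_eq_arg_sub_pi_of_im_pos him
      rw [neg_sub] at this
      linarith
    simp only [hrw]
    simpa using haux.add (tendsto_const_nhds (x := π))
  have hq3 : Tendsto (fun s : ℝ => (k + s) / (k - s)) atTop (nhds (-1)) := by
    have hden : Tendsto (fun s : ℝ => k / (s:ℂ) - 1) atTop (nhds (-1)) := by
      simpa using hs0.sub (tendsto_const_nhds (x := (1:ℂ)))
    have h1 : Tendsto (fun s : ℝ => (k / s + 1) / (k / s - 1)) atTop (nhds (-1)) := by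
      have := hq1.div hden (by norm_num)
      simpa [Pi.div_def] using this
    refine h1.congr' ?_
    filter_upwards [eventually_gt_atTop (0:ℝ)] with s hs
    have hs' : (s:ℂ) ≠ 0 := by exact_mod_cast ne_of_gt hs
    have hne : k / (s:ℂ) - 1 ≠ 0 := by
      intro hzero
      have : k = (s:ℂ) := by field_simp at hzero; linear_combination hzero
      have : k.im = 0 := by rw [this]; simp
      linarith
    have hne2 : k - (s:ℂ) ≠ 0 := hkt s
    field_simp
    try ring
  have hqr : Tendsto (fun s : ℝ =>
      Real.log (‖k + s‖) - Real.log (‖k - s‖)) atTop (nhds 0) := by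
    have habs : Tendsto (fun s : ℝ => ‖(k + s) / (k - s)‖) atTop (nhds 1) := by
      have := (continuous_norm.tendsto (-1)).comp hq3
      simpa [Function.comp_def] using this
    have hlog : Tendsto (fun s : ℝ => Real.log (‖(k + s) / (k - s)‖))
        atTop (nhds 0) := by
      have := (Real.continuousAt_log one_ne_zero).tendsto.comp habs
      simpa [Function.comp_def] using this
    refine hlog.congr ?_
    intro s
    have h1 : ‖k + s‖ ≠ 0 := by
      simp only [ne_eq, norm_eq_zero]
      intro hz
      have : (k + (s:ℂ)).im = k.im := by simp
      rw [hz] at this; simp at this; linarith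
    have h2 : ‖k - s‖ ≠ 0 := by
      simp only [ne_eq, norm_eq_zero]
      exact hkt s
    rw [norm_div, Real.log_div h1 h2]
  have hdecomp : ∀ s : ℝ, Complex.log (k + s) - Complex.log (k - s)
      = ((Real.log (‖k + s‖) - Real.log (‖k - s‖) : ℝ) : ℂ)
        + ((Complex.arg (k + s) - Complex.arg (k - s) : ℝ) : ℂ) * Complex.I := by
    intro s
    rw [Complex.log, Complex.log]
    push_cast
    ring
  have hA : Tendsto (fun s : ℝ =>
      ((Real.log (‖k + s‖) - Real.log (‖k - s‖) : ℝ) : ℂ))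
      atTop (nhds 0) := by
    have := (Complex.continuous_ofReal.tendsto (0:ℝ)).comp hqr
    simpa [Function.comp_def] using this
  have hB : Tendsto (fun s : ℝ =>
      ((Complex.arg (k + s) - Complex.arg (k - s) : ℝ) : ℂ)) atTop (nhds (-(π:ℂ))) := by
    have h1 := harg1.sub harg2
    have := (Complex.continuous_ofReal.tendsto (0 - π)).comp h1
    simpa [Function.comp_def] using this
  have hfin := hA.add (hB.mul (tendsto_const_nhds (x := Complex.I)))
  have : Tendsto (fun s : ℝ => Complex.log (k + s) - Complex.log (k - s)) atTop
      (nhds (-(π:ℂ) * Complex.I)) := by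
    simp only [hdecomp]
    simpa using hfin
  exact this.congr fun s => (heval s).symm

end Stmt19Aux

open Stmt19

set_option maxHeartbeats 1000000 in
/-- (Lemma 4.2 of the paper, general `m`.) Let `h : ℝ → ℝ` be locally
integrable and `I₀, …, I_m ∈ ℝ` (here `Iseq i = I_i`). With
`P_j(t) = ∑_{i=0}^{j} I_i/t^{i+1}` and `h_j(t) = t^{j+1}(h(t) − P_j(t))`, `h_{−1} = h`
(so `h_{j−1}(t) = t^j (h(t) − ∑_{i<j} I_i/t^{i+1})` for `0 ≤ j ≤ m`), assume
`h_m(t) → 0` as `t → ±∞` and `∫ |h_m(t)|(1+|t|)^{−a} dt < ∞` for some `a < 1`. Then: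
(1) each principal value `𝒥_j = lim_{s→∞}(1/π)∫_{−s}^s h_{j−1}` exists, `0 ≤ j ≤ m`;
(2) for `Im k > 0` the principal value `M(k) = lim_{s→∞}(1/π)∫_{−s}^s h(t)/(k−t) dt`
exists and equals `∑_{j=0}^m (𝒥_j − iI_j)/k^{j+1} + M_m(k)/k^{m+1}`, where
`M_m(k) = (1/π)∫ h_m(t)/(k−t) dt` converges absolutely; (3) `M_m(iτ) → 0` as `τ → +∞`. -/
theorem stmt_19 (m : ℕ) (h : ℝ → ℝ) (hloc : LocallyIntegrable h volume)
    (Iseq : ℕ → ℝ)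
    (hm : ℝ → ℝ)
    (hhm : ∀ t : ℝ, hm t =
      t ^ (m + 1) * (h t - ∑ i ∈ Finset.range (m + 1), Iseq i / t ^ (i + 1)))
    (htop : Tendsto hm atTop (nhds 0)) (hbot : Tendsto hm atBot (nhds 0))
    (a : ℝ) (ha : a < 1)
    (hint : Integrable (fun t : ℝ => |hm t| * (1 + |t|) ^ (-a))) :
    ∃ 𝒥 : ℕ → ℝ,
      (∀ j ≤ m, Tendsto
        (fun s : ℝ => (1 / π) * ∫ t in (-s)..s,
          t ^ j * (h t - ∑ i ∈ Finset.range j, Iseq i / t ^ (i + 1)))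
        atTop (nhds (𝒥 j))) ∧
      (∀ k : ℂ, 0 < k.im →
        Integrable (fun t : ℝ => ((hm t : ℝ) : ℂ) / (k - (t : ℂ))) ∧
        Tendsto (fun s : ℝ => (1 / (π : ℂ)) * ∫ t in (-s)..s, ((h t : ℝ) : ℂ) / (k - (t : ℂ)))
          atTop
          (nhds (∑ j ∈ Finset.range (m + 1),
              ((𝒥 j : ℂ) - Complex.I * (Iseq j : ℂ)) / k ^ (j + 1)
            + ((1 / (π : ℂ)) * ∫ t : ℝ, ((hm t : ℝ) : ℂ) / (k - (t : ℂ))) / k ^ (m + 1)))) ∧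
      Tendsto (fun τ : ℝ =>
          (1 / (π : ℂ)) * ∫ t : ℝ, ((hm t : ℝ) : ℂ) / (Complex.I * (τ : ℂ) - (t : ℂ)))
        atTop (nhds 0) := by
  classical
  have h0ae : ∀ᵐ t : ℝ, t ≠ (0:ℝ) := by
    have hset : {t : ℝ | ¬ t ≠ 0} = {(0:ℝ)} := by ext t; simp
    rw [ae_iff, hset]
    exact Real.volume_singleton
  have hm_eq : hm = ffn h Iseq (m+1) := funext fun t => hhm t
  have haesm : ∀ j, AEStronglyMeasurable (ffn h Iseq j) volume := by
    intro j
    have hP : Measurable fun t : ℝ => ∑ i ∈ Finset.range j, Iseq i / t ^ (i + 1) := by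
      apply Finset.measurable_sum
      intro i _
      exact measurable_const.div (measurable_id.pow_const (i+1))
    exact (measurable_id.pow_const j).aestronglyMeasurable.mul
      (hloc.aestronglyMeasurable.sub hP.aestronglyMeasurable)
  have hlocf : ∀ j, LocallyIntegrable (ffn h Iseq j) volume := by
    intro j
    have hpt : ∀ t : ℝ, t ≠ 0 → ffn h Iseq j t
        = t ^ j * h t - ∑ i ∈ Finset.range j, Iseq i * t ^ (j - 1 - i) := by
      intro t ht
      simp only [ffn, mul_sub]
      congr 1
      rw [Finset.mul_sum]
      refine Finset.sum_congr rfl ?_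
      intro i hi
      have hij : i + 1 ≤ j := Finset.mem_range.mp hi
      have hsplit : t ^ j = t ^ (j - 1 - i) * t ^ (i + 1) := by
        rw [← pow_add]; congr 1; omega
      calc t ^ j * (Iseq i / t ^ (i+1))
          = Iseq i * t ^ (j-1-i) * (t ^ (i+1) / t ^ (i+1)) := by rw [hsplit]; ring
        _ = Iseq i * t ^ (j-1-i) := by rw [div_self (pow_ne_zero _ ht), mul_one]
    have h1 : LocallyIntegrable (fun t : ℝ => t ^ j * h t) volume := by
      rw [MeasureTheory.locallyIntegrable_iff]
      intro K hK
      obtain ⟨R, hR⟩ := hK.isBounded.subset_closedBall 0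
      refine Integrable.mono' ((hloc.integrableOn_isCompact hK).norm.const_mul ((1+|R|)^j))
        (((measurable_id.pow_const j).aestronglyMeasurable.mul hloc.aestronglyMeasurable).restrict)
        (ae_restrict_of_forall_mem hK.measurableSet ?_)
      intro t ht
      have htR : |t| ≤ 1 + |R| := by
        have h2 := hR ht
        simp only [Metric.mem_closedBall, Real.dist_eq, sub_zero] at h2
        calc |t| ≤ R := h2
          _ ≤ |R| := le_abs_self R
          _ ≤ 1 + |R| := by linarith
      have he : ‖t ^ j * h t‖ = |t|^j * ‖h t‖ := by
        rw [norm_mul, Real.norm_eq_abs, abs_pow]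
      rw [he]
      exact mul_le_mul_of_nonneg_right (pow_le_pow_left₀ (abs_nonneg t) htR j) (norm_nonneg _)
    have h2 : LocallyIntegrable
        (fun t : ℝ => ∑ i ∈ Finset.range j, Iseq i * t ^ (j-1-i)) volume := by
      apply Continuous.locallyIntegrable
      continuity
    have hpoly := h1.sub h2
    rw [MeasureTheory.locallyIntegrable_iff] at hpoly ⊢
    intro K hK
    refine (hpoly K hK).congr ?_
    refine ae_restrict_of_ae ?_
    filter_upwards [h0ae] with t ht
    exact (hpt t ht).symm
  set S : Set ℝ := {t : ℝ | 1 ≤ |t|} with hSdef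
  have hSm : MeasurableSet S := measurableSet_le measurable_const continuous_abs.measurable
  have haesm_div : ∀ j, AEStronglyMeasurable (fun t : ℝ => ffn h Iseq j t / t) volume := by
    intro j
    refine ((haesm j).mul (measurable_inv.aestronglyMeasurable)).congr ?_
    exact ae_of_all _ fun t => (div_eq_mul_inv _ _).symm
  have intS : ∀ d j, j + d = m + 1 → 1 ≤ j →
      IntegrableOn (fun t => ffn h Iseq j t / t) S volume := by
    intro d
    induction d with
    | zero =>
      intro j hj _
      have hjm : j = m + 1 := by omega
      subst hjm
      refine Integrable.mono' ((hint.const_mul 2).integrableOn)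
        ((haesm_div (m+1)).restrict)
        (ae_restrict_of_forall_mem hSm ?_)
      intro t ht
      have ht1 : 1 ≤ |t| := ht
      rw [← hm_eq]
      have h2 : ‖hm t / t‖ = |hm t| * (1/|t|) := by
        rw [Real.norm_eq_abs, abs_div, div_eq_mul_one_div]
      rw [h2]
      calc |hm t| * (1/|t|) ≤ |hm t| * (2 * (1+|t|) ^ (-a)) :=
            mul_le_mul_of_nonneg_left (stmt19_inv_le ha ht1) (abs_nonneg _)
        _ = 2 * (|hm t| * (1+|t|) ^ (-a)) := by ring
    | succ d ih =>
      intro j hj hj1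
      have hIH := ih (j+1) (by omega) (by omega)
      have hbound : IntegrableOn
          (fun t => ‖ffn h Iseq (j+1) t / t‖ + 2*|Iseq j| * (1+t^2)⁻¹) S volume :=
        hIH.norm.add ((integrable_inv_one_add_sq.const_mul (2*|Iseq j|)).integrableOn)
      refine Integrable.mono' hbound
        ((haesm_div j).restrict)
        (ae_restrict_of_forall_mem hSm ?_)
      intro t ht
      have ht1 : 1 ≤ |t| := ht
      have ht0 : t ≠ 0 := by
        intro h0; rw [h0] at ht1; simp at ht1; linarith
      have hsq : 1 ≤ t^2 := by nlinarith [sq_abs t]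
      have hid : ffn h Iseq j t / t = ffn h Iseq (j+1) t / t * (1/t) + Iseq j * (1/t^2) := by
        have h2 := ffn_succ h Iseq j ht0
        have h3 : ffn h Iseq j t = (ffn h Iseq (j+1) t + Iseq j) / t := by
          rw [h2]; field_simp; ring
        rw [h3]; field_simp
      rw [hid]
      have e1 : ‖ffn h Iseq (j+1) t / t * (1/t)‖ ≤ ‖ffn h Iseq (j+1) t / t‖ := by
        rw [norm_mul]
        refine mul_le_of_le_one_right (norm_nonneg _) ?_
        rw [Real.norm_eq_abs, one_div, abs_inv]
        exact inv_le_one_of_one_le₀ ht1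
      have e2 : ‖Iseq j * (1/t^2)‖ ≤ 2*|Iseq j| * (1+t^2)⁻¹ := by
        rw [Real.norm_eq_abs, abs_mul]
        have hq : |1/t^2| = 1/t^2 := abs_of_pos (by positivity)
        rw [hq]
        have h4 : 1/t^2 ≤ 2/(1+t^2) := by
          rw [div_le_div_iff₀ (by positivity) (by positivity)]; nlinarith
        calc |Iseq j| * (1/t^2) ≤ |Iseq j| * (2/(1+t^2)) :=
              mul_le_mul_of_nonneg_left h4 (abs_nonneg _)
          _ = 2*|Iseq j| * (1+t^2)⁻¹ := by rw [div_eq_mul_inv]; ring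
      calc ‖ffn h Iseq (j+1) t / t * (1/t) + Iseq j * (1/t^2)‖
          ≤ ‖ffn h Iseq (j+1) t / t * (1/t)‖ + ‖Iseq j * (1/t^2)‖ := norm_add_le _ _
        _ ≤ ‖ffn h Iseq (j+1) t / t‖ + 2*|Iseq j| * (1+t^2)⁻¹ := add_le_add e1 e2
  set g : ℕ → ℝ → ℝ :=
    fun j t => if |t| < 1 then ffn h Iseq j t else ffn h Iseq (j+1) t / t with hgdef
  have hBm : MeasurableSet {t : ℝ | |t| < 1} :=
    measurableSet_lt continuous_abs.measurable measurable_const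
  have intg : ∀ j, j ≤ m → Integrable (g j) volume := by
    intro j hj
    have h1 : IntegrableOn (g j) {t : ℝ | |t| < 1} volume := by
      have hIcc : IntegrableOn (ffn h Iseq j) (Set.Icc (-1:ℝ) 1) volume :=
        (hlocf j).integrableOn_isCompact isCompact_Icc
      have hsub : {t : ℝ | |t| < 1} ⊆ Set.Icc (-1:ℝ) 1 := by
        intro t ht
        have ht' : |t| < 1 := ht
        have h2 := abs_lt.mp ht'
        exact ⟨by linarith [h2.1], by linarith [h2.2]⟩
      refine (hIcc.mono_set hsub).congr_fun ?_ hBm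
      intro t ht
      exact (if_pos ht).symm
    have h2 : IntegrableOn (g j) S volume := by
      have h3 := intS (m - j) (j+1) (by omega) (by omega)
      refine h3.congr_fun ?_ hSm
      intro t ht
      have h4 : ¬ |t| < 1 := not_lt.mpr ht
      exact (if_neg h4).symm
    have hun : IntegrableOn (g j) ({t : ℝ | |t| < 1} ∪ S) volume := h1.union h2
    have hcov : {t : ℝ | |t| < 1} ∪ S = Set.univ := by
      rw [hSdef]; ext t; simp; exact lt_or_ge _ _
    rwa [hcov, integrableOn_univ] at hun
  set u : ℝ → ℝ := fun t => if |t| < 1 then (0:ℝ) else 1/t with hudef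
  have humeas : Measurable u :=
    Measurable.ite hBm measurable_const (measurable_const.div measurable_id)
  have huii : ∀ s : ℝ, IntervalIntegrable u volume (-s) s := by
    intro s
    refine (intervalIntegrable_const (c := (1:ℝ))).mono_fun humeas.aestronglyMeasurable ?_
    refine ae_of_all _ ?_
    intro t
    show ‖u t‖ ≤ ‖(1:ℝ)‖
    rw [Real.norm_eq_abs, Real.norm_eq_abs, abs_one]
    by_cases hlt : |t| < 1
    · simp [hudef, hlt]
    · have ht1 : 1 ≤ |t| := not_lt.mp hlt
      simp only [hudef, if_neg hlt]
      rw [abs_div, abs_one]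
      rw [div_le_one (by linarith)]
      exact ht1
  have hsplit : ∀ j, j ≤ m → ∀ s : ℝ,
      (∫ t in (-s)..s, ffn h Iseq j t) = ∫ t in (-s)..s, g j t := by
    intro j hj s
    have hEq : ∀ t, ffn h Iseq j t = g j t + Iseq j * u t := by
      intro t
      by_cases hlt : |t| < 1
      · simp [hgdef, hudef, hlt]
      · have ht1 : 1 ≤ |t| := not_lt.mp hlt
        have ht0 : t ≠ 0 := by
          intro h0; rw [h0] at ht1; simp at ht1; linarith
        have h2 := ffn_succ h Iseq j ht0
        simp only [hgdef, hudef, if_neg hlt]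
        rw [h2]
        field_simp
        ring
    rw [intervalIntegral.integral_congr (g := fun t => g j t + Iseq j * u t) (fun t _ => hEq t)]
    rw [intervalIntegral.integral_add ((intg j hj).intervalIntegrable) ((huii s).const_mul _)]
    rw [intervalIntegral.integral_const_mul]
    have hu0 : (∫ t in (-s)..s, u t) = 0 := stmt19_odd_integral s
    rw [hu0]
    ring
  have Jlim : ∀ j, j ≤ m → Tendsto (fun s : ℝ => ∫ t in (-s)..s, ffn h Iseq j t)
      atTop (nhds (∫ t, g j t)) := by
    intro j hj
    have h1 := MeasureTheory.intervalIntegral_tendsto_integral (intg j hj)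
      tendsto_neg_atTop_atBot tendsto_id
    exact h1.congr fun s => (hsplit j hj s).symm
  refine ⟨fun j => (1/π) * ∫ t, g j t, ?_, ?_, ?_⟩
  · -- part (1)
    intro j hj
    exact (Jlim j hj).const_mul (1/π)
  · -- part (2)
    intro k hk
    have hk0 : k ≠ 0 := by
      intro h0; rw [h0] at hk; simp at hk
    have hkt : ∀ t : ℝ, k - (t:ℂ) ≠ 0 := by
      intro t hz
      have h1 : (k - (t:ℂ)).im = k.im := by simp
      rw [hz] at h1; simp at h1; linarith
    have habsim : ∀ t : ℝ, k.im ≤ ‖k - t‖ := by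
      intro t
      have h1 := Complex.abs_im_le_norm (k - t)
      have h2 : (k - (t:ℂ)).im = k.im := by simp
      rw [h2] at h1
      calc k.im ≤ |k.im| := le_abs_self _
        _ ≤ _ := h1
    have hC : Continuous fun t : ℝ => (k - (t:ℂ))⁻¹ :=
      (continuous_const.sub Complex.continuous_ofReal).inv₀ hkt
    have haesm_hm : AEStronglyMeasurable hm volume := by
      rw [hm_eq]; exact haesm (m+1)
    have hmloc : LocallyIntegrable hm volume := by
      rw [hm_eq]; exact hlocf (m+1)
    have hInt : Integrable (fun t : ℝ => ((hm t:ℝ):ℂ) / (k - t)) volume := by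
      set c : ℝ := max 1 (2 * ‖k‖) with hcdef
      have hc1 : (1:ℝ) ≤ c := le_max_left _ _
      have hT2m : MeasurableSet {t : ℝ | c ≤ |t|} :=
        measurableSet_le measurable_const continuous_abs.measurable
      have hfe : (fun t : ℝ => ((hm t:ℝ):ℂ)/(k - t))
          = fun t : ℝ => (k - (t:ℂ))⁻¹ * ((hm t:ℝ):ℂ) :=
        funext fun t => by rw [div_eq_mul_inv, mul_comm]
      have hT1 : IntegrableOn (fun t : ℝ => ((hm t:ℝ):ℂ)/(k - t)) {t : ℝ | |t| < c} volume := by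
        have hbase : IntegrableOn (fun t : ℝ => ((hm t:ℝ):ℂ)) (Set.Icc (-c) c) volume :=
          (hmloc.integrableOn_isCompact isCompact_Icc).ofReal
        have hmul : IntegrableOn (fun t : ℝ => (k - (t:ℂ))⁻¹ * ((hm t:ℝ):ℂ))
            (Set.Icc (-c) c) volume :=
          hbase.bdd_mul hC.aestronglyMeasurable.restrict (ae_of_all _ fun t => show ‖(k - (t:ℂ))⁻¹‖ ≤ (k.im)⁻¹ by
            rw [norm_inv]
            exact inv_anti₀ hk (habsim t))
        have hsub : {t : ℝ | |t| < c} ⊆ Set.Icc (-c) c := by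
          intro t ht
          have ht' : |t| < c := ht
          have h2 := abs_lt.mp ht'
          exact ⟨by linarith [h2.1], by linarith [h2.2]⟩
        rw [hfe]
        exact hmul.mono_set hsub
      have haesmDiv : AEStronglyMeasurable (fun t : ℝ => ((hm t:ℝ):ℂ)/(k - t)) volume := by
        rw [hfe]
        exact hC.aestronglyMeasurable.mul
          (Complex.continuous_ofReal.comp_aestronglyMeasurable haesm_hm)
      have hT2 : IntegrableOn (fun t : ℝ => ((hm t:ℝ):ℂ)/(k - t)) {t : ℝ | c ≤ |t|} volume := by
        refine Integrable.mono' ((hint.const_mul 4).integrableOn)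
          haesmDiv.restrict (ae_restrict_of_forall_mem hT2m ?_)
        intro t ht
        have ht1 : 1 ≤ |t| := le_trans hc1 ht
        have htk : 2 * ‖k‖ ≤ |t| := le_trans (le_max_right _ _) ht
        have habs2 : |t|/2 ≤ ‖k - t‖ := by
          have h1 := Complex.abs_re_le_norm (k - t)
          have h2 : (k - (t:ℂ)).re = k.re - t := by simp
          rw [h2] at h1
          have h3 : |t| - |k.re| ≤ |k.re - t| := by
            have := abs_sub_abs_le_abs_sub t k.re
            rw [abs_sub_comm] at this
            linarith
          have h4 : |k.re| ≤ ‖k‖ := Complex.abs_re_le_norm k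
          linarith
        have hpos : (0:ℝ) < ‖k - t‖ := by
          have : (0:ℝ) < |t|/2 := by linarith
          linarith
        have hnorm : ‖((hm t:ℝ):ℂ)/(k - t)‖ = |hm t| / ‖k - t‖ := by
          rw [norm_div, Complex.norm_real, Real.norm_eq_abs]
        rw [hnorm]
        calc |hm t| / ‖k - t‖ ≤ |hm t| / (|t|/2) :=
              div_le_div_of_nonneg_left (abs_nonneg _) (by linarith) habs2
          _ = |hm t| * (2 * (1/|t|)) := by
              field_simp
          _ ≤ |hm t| * (2 * (2 * (1+|t|) ^ (-a))) := by
              refine mul_le_mul_of_nonneg_left ?_ (abs_nonneg _)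
              exact mul_le_mul_of_nonneg_left (stmt19_inv_le ha ht1) (by norm_num)
          _ = 4 * (|hm t| * (1+|t|) ^ (-a)) := by ring
      have hcov : {t : ℝ | |t| < c} ∪ {t : ℝ | c ≤ |t|} = Set.univ := by
        ext t; simp; exact lt_or_ge _ _
      have hun := hT1.union hT2
      rwa [hcov, integrableOn_univ] at hun
    refine ⟨hInt, ?_⟩
    have hii_ff : ∀ j (s : ℝ), IntervalIntegrable (ffn h Iseq j) volume (-s) s := by
      intro j s
      rw [intervalIntegrable_iff']
      exact (hlocf j).integrableOn_isCompact isCompact_uIcc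
    have hofR : ∀ j (s : ℝ),
        IntervalIntegrable (fun t => ((ffn h Iseq j t:ℝ):ℂ)) volume (-s) s := by
      intro j s
      exact ⟨(hii_ff j s).1.ofReal, (hii_ff j s).2.ofReal⟩
    have hbdd : ∃ C, ∀ t : ℝ, ‖(k - (t:ℂ))⁻¹‖ ≤ C :=
      ⟨(k.im)⁻¹, fun t => by
        rw [norm_inv]
        exact inv_anti₀ hk (habsim t)⟩
    have mulinv : ∀ j (s : ℝ),
        IntervalIntegrable (fun t => ((ffn h Iseq j t:ℝ):ℂ)/(k - t)) volume (-s) s := by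
      intro j s
      have hfe : (fun t : ℝ => ((ffn h Iseq j t:ℝ):ℂ)/(k - t))
          = fun t : ℝ => (k - (t:ℂ))⁻¹ * ((ffn h Iseq j t:ℝ):ℂ) :=
        funext fun t => by rw [div_eq_mul_inv, mul_comm]
      rw [hfe]
      exact ⟨((hii_ff j s).1.ofReal).bdd_mul hC.aestronglyMeasurable.restrict (ae_of_all _ hbdd.choose_spec),
        ((hii_ff j s).2.ofReal).bdd_mul hC.aestronglyMeasurable.restrict (ae_of_all _ hbdd.choose_spec)⟩
    have hiic : ∀ s : ℝ, IntervalIntegrable (fun t : ℝ => (k - (t:ℂ))⁻¹) volume (-s) s :=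
      fun s => hC.intervalIntegrable _ _
    have hreq : ∀ j (s : ℝ),
        (∫ t in (-s)..s, ((ffn h Iseq j t:ℝ):ℂ)/(k - t))
        = (1/k) * ((∫ t in (-s)..s, ffn h Iseq j t : ℝ) : ℂ)
          + ((1/k) * (∫ t in (-s)..s, ((ffn h Iseq (j+1) t:ℝ):ℂ)/(k - t))
            + ((Iseq j : ℂ)/k) * (∫ t in (-s)..s, (k - (t:ℂ))⁻¹)) := by
      intro j s
      have hstep : (∫ t in (-s)..s, ((ffn h Iseq j t:ℝ):ℂ)/(k - t))
          = ∫ t in (-s)..s, ((1/k) * ((ffn h Iseq j t:ℝ):ℂ)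
            + ((1/k) * (((ffn h Iseq (j+1) t:ℝ):ℂ)/(k - t))
              + ((Iseq j:ℂ)/k) * (k - (t:ℂ))⁻¹)) := by
        refine intervalIntegral.integral_congr_ae ?_
        filter_upwards [h0ae] with t ht0 _
        have h2 : ((ffn h Iseq (j+1) t : ℝ):ℂ)
            = (t:ℂ) * ((ffn h Iseq j t:ℝ):ℂ) - ((Iseq j:ℝ):ℂ) := by
          exact_mod_cast congrArg (fun x : ℝ => (x:ℂ)) (ffn_succ h Iseq j ht0)
        rw [h2]
        have hne := hkt t
        field_simp
        ring
      rw [hstep]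
      rw [intervalIntegral.integral_add ((hofR j s).const_mul (1/k))
        (((mulinv (j+1) s).const_mul (1/k)).add ((hiic s).const_mul ((Iseq j:ℂ)/k)))]
      rw [intervalIntegral.integral_add ((mulinv (j+1) s).const_mul (1/k))
        ((hiic s).const_mul ((Iseq j:ℂ)/k))]
      rw [intervalIntegral.integral_const_mul, intervalIntegral.integral_const_mul,
        intervalIntegral.integral_const_mul, intervalIntegral.integral_ofReal]
    set Mm : ℂ := ∫ t : ℝ, ((hm t:ℝ):ℂ)/(k - t) with hMm
    set E : ℕ → ℂ := fun d => Nat.rec Mm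
      (fun d' Ed => (((∫ t : ℝ, g (m - d') t : ℝ) : ℂ)
        - (π:ℂ) * Complex.I * (Iseq (m - d'):ℂ) + Ed)/k) d with hE
    have hE0 : E 0 = Mm := by rw [hE]; rfl
    have hEsucc : ∀ d, E (d+1)
        = (((∫ t : ℝ, g (m - d) t : ℝ) : ℂ)
          - (π:ℂ) * Complex.I * (Iseq (m - d):ℂ) + E d)/k := by
      intro d
      rw [hE]
      try rfl
    have hJC : ∀ j, j ≤ m → Tendsto
        (fun s : ℝ => ((∫ t in (-s)..s, ffn h Iseq j t : ℝ):ℂ)) atTop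
        (nhds ((∫ t : ℝ, g j t : ℝ):ℂ)) := by
      intro j hj
      have := (Complex.continuous_ofReal.tendsto _).comp (Jlim j hj)
      simpa [Function.comp_def] using this
    have hIlim := stmt19_tendsto_inv k hk
    have main : ∀ d, d ≤ m + 1 → Tendsto (fun s : ℝ =>
        ∫ t in (-s)..s, ((ffn h Iseq (m+1-d) t : ℝ):ℂ)/(k - t)) atTop (nhds (E d)) := by
      intro d
      induction d with
      | zero =>
        intro _
        simp only [Nat.sub_zero]
        have hfe2 : (fun s : ℝ => ∫ t in (-s)..s, ((ffn h Iseq (m+1) t:ℝ):ℂ)/(k - t))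
            = fun s : ℝ => ∫ t in (-s)..s, ((hm t:ℝ):ℂ)/(k - (t:ℂ)) := by
          funext s
          refine intervalIntegral.integral_congr fun t _ => ?_
          rw [hm_eq]
        rw [hfe2, hE0, hMm]
        exact MeasureTheory.intervalIntegral_tendsto_integral hInt
          tendsto_neg_atTop_atBot tendsto_id
      | succ d ih =>
        intro hd1
        have hdm : d ≤ m := by omega
        have hidx : m + 1 - (d+1) = m - d := by omega
        have hidx2 : (m - d) + 1 = m + 1 - d := by omega
        rw [hidx]
        have IH := ih (by omega)
        rw [← hidx2] at IH
        have comb := ((hJC (m - d) (by omega)).const_mul (1/k)).add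
          ((IH.const_mul (1/k)).add (hIlim.const_mul ((Iseq (m - d):ℂ)/k)))
        have htd := comb.congr fun s => (hreq (m - d) s).symm
        have hval : (1/k) * ((∫ t : ℝ, g (m-d) t : ℝ):ℂ)
            + ((1/k) * E d + ((Iseq (m-d):ℂ)/k) * (-(π:ℂ)*Complex.I)) = E (d+1) := by
          rw [hEsucc]
          field_simp
          ring
        rw [← hval]
        exact htd
    have final := main (m+1) le_rfl
    simp only [Nat.sub_self] at final
    have closed : ∀ d, E d = (∑ i ∈ Finset.range d,
        ((((∫ t : ℝ, g (m - i) t : ℝ):ℂ)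
          - (π:ℂ)*Complex.I*(Iseq (m - i):ℂ))/k^(d - i))) + Mm/k^d := by
      intro d
      induction d with
      | zero => simp [hE0]
      | succ d ih =>
        rw [hEsucc, ih, Finset.sum_range_succ]
        have hterm : ∀ i ∈ Finset.range d,
            ((((∫ t : ℝ, g (m - i) t : ℝ):ℂ)
              - (π:ℂ)*Complex.I*(Iseq (m-i):ℂ))/k^(d+1-i))
            = ((((∫ t : ℝ, g (m - i) t : ℝ):ℂ)
              - (π:ℂ)*Complex.I*(Iseq (m-i):ℂ))/k^(d-i))/k := by
          intro i hi
          have hi' : i < d := Finset.mem_range.mp hi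
          have he : d + 1 - i = (d - i) + 1 := by omega
          rw [he, pow_succ, div_div]
        rw [Finset.sum_congr rfl hterm]
        rw [show d + 1 - d = 1 from by omega, pow_one]
        rw [← Finset.sum_div, pow_succ]
        have hkp : k ^ d ≠ 0 := pow_ne_zero _ hk0
        field_simp
        ring
    have hreflect : E (m+1) = (∑ j ∈ Finset.range (m+1),
        ((((∫ t : ℝ, g j t : ℝ):ℂ) - (π:ℂ)*Complex.I*(Iseq j:ℂ))/k^(j+1))) + Mm/k^(m+1) := by
      rw [closed (m+1)]
      congr 1
      conv_rhs => rw [← Finset.sum_range_reflect]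
      refine Finset.sum_congr rfl ?_
      intro i hi
      have hi' : i < m + 1 := Finset.mem_range.mp hi
      have e1 : m + 1 - 1 - i = m - i := by omega
      have e2 : m - i + 1 = m + 1 - i := by omega
      rw [e1, e2]
    have hπ : (π:ℂ) ≠ 0 := by
      exact_mod_cast Real.pi_ne_zero
    have hval2 : (1/(π:ℂ)) * E (m+1)
        = (∑ j ∈ Finset.range (m+1),
            ((((1/π) * ∫ t : ℝ, g j t : ℝ):ℂ) - Complex.I * (Iseq j:ℂ))/k^(j+1))
          + ((1/(π:ℂ)) * Mm)/k^(m+1) := by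
      rw [hreflect, mul_add, Finset.mul_sum]
      congr 1
      · refine Finset.sum_congr rfl ?_
        intro j _
        push_cast
        field_simp
      · rw [mul_div_assoc]
    have hgoalfn : (fun s : ℝ => (1/(π:ℂ)) * ∫ t in (-s)..s, ((h t:ℝ):ℂ)/(k - t))
        = fun s : ℝ => (1/(π:ℂ)) * ∫ t in (-s)..s, ((ffn h Iseq 0 t:ℝ):ℂ)/(k - t) := by
      funext s
      congr 1
      refine intervalIntegral.integral_congr fun t _ => ?_
      rw [ffn_zero]
    beta_reduce
    rw [hgoalfn, ← hval2]
    exact final.const_mul (1/(π:ℂ))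
  · -- part (3)
    have haesm_hm : AEStronglyMeasurable hm volume := by
      rw [hm_eq]; exact haesm (m+1)
    have hlim : Tendsto (fun τ : ℝ => ∫ t : ℝ, ((hm t:ℝ):ℂ) / (Complex.I * τ - t)) atTop
        (nhds 0) := by
      have h0 : (0:ℂ) = ∫ _ : ℝ, (0:ℂ) := by simp
      rw [h0]
      refine MeasureTheory.tendsto_integral_filter_of_dominated_convergence
        (fun t => 2 * (|hm t| * (1+|t|) ^ (-a))) ?_ ?_ (hint.const_mul 2) ?_
      · filter_upwards [eventually_ge_atTop (1:ℝ)] with τ hτ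
        have hne : ∀ t : ℝ, Complex.I*(τ:ℂ) - (t:ℂ) ≠ 0 := by
          intro t hz
          have h1 : (Complex.I*(τ:ℂ) - (t:ℂ)).im = τ := by simp
          rw [hz] at h1; simp at h1; linarith
        have hc2 : Continuous fun t : ℝ => (Complex.I*(τ:ℂ) - (t:ℂ))⁻¹ :=
          (continuous_const.sub Complex.continuous_ofReal).inv₀ hne
        refine ((Complex.continuous_ofReal.comp_aestronglyMeasurable haesm_hm).mul
          hc2.aestronglyMeasurable).congr ?_
        exact ae_of_all _ fun t => (div_eq_mul_inv _ _).symm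
      · filter_upwards [eventually_ge_atTop (1:ℝ)] with τ hτ
        refine ae_of_all _ ?_
        intro t
        have him : (Complex.I*(τ:ℂ) - (t:ℂ)).im = τ := by simp
        have hre : (Complex.I*(τ:ℂ) - (t:ℂ)).re = -t := by simp
        have h1 : |t| ≤ ‖Complex.I*(τ:ℂ) - t‖ := by
          have h1' := Complex.abs_re_le_norm (Complex.I*(τ:ℂ) - t)
          rw [hre, abs_neg] at h1'
          exact h1'
        have h2 : (1:ℝ) ≤ ‖Complex.I*(τ:ℂ) - t‖ := by
          have h3 := Complex.abs_im_le_norm (Complex.I*(τ:ℂ) - t)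
          rw [him] at h3
          have h4 : τ ≤ |τ| := le_abs_self τ
          linarith
        have habs : (1+|t|)/2 ≤ ‖Complex.I*(τ:ℂ) - t‖ := by linarith
        have hnorm : ‖((hm t:ℝ):ℂ)/(Complex.I*(τ:ℂ) - t)‖
            = |hm t| / ‖Complex.I*(τ:ℂ) - t‖ := by
          rw [norm_div, Complex.norm_real, Real.norm_eq_abs]
        have hb0 : (0:ℝ) < 1 + |t| := by linarith [abs_nonneg t]
        have hr : (1+|t|)⁻¹ ≤ (1+|t|) ^ (-a) := by
          rw [← Real.rpow_neg_one]
          exact Real.rpow_le_rpow_of_exponent_le (by linarith [abs_nonneg t]) (by linarith)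
        show ‖((hm t:ℝ):ℂ)/(Complex.I*(τ:ℂ) - t)‖ ≤ 2 * (|hm t| * (1+|t|) ^ (-a))
        rw [hnorm]
        calc |hm t| / ‖Complex.I*(τ:ℂ) - t‖ ≤ |hm t| / ((1+|t|)/2) :=
              div_le_div_of_nonneg_left (abs_nonneg _) (by positivity) habs
          _ = 2 * |hm t| * (1+|t|)⁻¹ := by
              rw [div_div_eq_mul_div, div_eq_mul_inv]; ring
          _ ≤ 2 * |hm t| * (1+|t|) ^ (-a) := by
              refine mul_le_mul_of_nonneg_left hr (by positivity)
          _ = 2 * (|hm t| * (1+|t|) ^ (-a)) := by ring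
      · refine ae_of_all _ ?_
        intro t
        show Tendsto (fun τ : ℝ => ((hm t:ℝ):ℂ)/(Complex.I*(τ:ℂ) - t)) atTop (nhds 0)
        refine squeeze_zero_norm' (a := fun τ : ℝ => |hm t| * τ⁻¹) ?_ ?_
        · show ∀ᶠ τ : ℝ in atTop, ‖((hm t:ℝ):ℂ)/(Complex.I*(τ:ℂ) - t)‖ ≤ |hm t| * τ⁻¹
          filter_upwards [eventually_ge_atTop (1:ℝ)] with τ hτ
          have h3 := Complex.abs_im_le_norm (Complex.I*(τ:ℂ) - t)
          have him : (Complex.I*(τ:ℂ) - (t:ℂ)).im = τ := by simp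
          rw [him] at h3
          have hτ0 : (0:ℝ) < τ := by linarith
          have h4 : τ ≤ ‖Complex.I*(τ:ℂ) - t‖ := le_trans (le_abs_self τ) h3
          have hnorm : ‖((hm t:ℝ):ℂ)/(Complex.I*(τ:ℂ) - t)‖
              = |hm t| / ‖Complex.I*(τ:ℂ) - t‖ := by
            rw [norm_div, Complex.norm_real, Real.norm_eq_abs]
          rw [hnorm]
          calc |hm t| / ‖Complex.I*(τ:ℂ) - t‖ ≤ |hm t| / τ :=
                div_le_div_of_nonneg_left (abs_nonneg _) hτ0 h4
            _ = |hm t| * τ⁻¹ := div_eq_mul_inv _ _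
        · simpa using tendsto_inv_atTop_zero.const_mul (|hm t|)
    have hfin := hlim.const_mul (1/(π:ℂ))
    simpa using hfin
end
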